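/- arXiv:1109.1348 — 5 statements merged into one kernel-verified Lean document; each statement's English description precedes it below -/
import Mathlib

section
/- Let f : ℕ → ℂ satisfy |f(n)| ≤ 1 for all n ≥ 1, let y ≥ 1 be a real number, and let δ > 0. Then |∑_{n ≤ y} f(n)/n^{1+δ}| ≤ max_{1 ≤ N ≤ y} |∑_{n ≤ N} f(n)/n|. -/
open Finset

lemma abel_bound (a : ℕ → ℂ) (w : ℕ → ℝ) (M : ℝ) (K : ℕ)
    (hw0 : ∀ n, 0 ≤ w n) (hwa : ∀ n, w (n + 1) ≤ w n)
    (hM : ∀ m : ℕ, 1 ≤ m → m ≤ K → ‖∑ i ∈ Finset.range m, a i‖ ≤ M)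
    (hM0 : 0 ≤ M) (hw1 : w 0 ≤ 1) :
    ‖∑ i ∈ Finset.range K, w i • a i‖ ≤ M := by
  rcases Nat.eq_zero_or_pos K with rfl | hK
  · simpa using hM0
  rw [Finset.sum_range_by_parts]
  have hGK : ‖∑ i ∈ Finset.range K, a i‖ ≤ M := hM K hK le_rfl
  calc ‖w (K - 1) • ∑ i ∈ Finset.range K, a i -
        ∑ i ∈ Finset.range (K - 1), (w (i + 1) - w i) • ∑ j ∈ Finset.range (i + 1), a j‖
      ≤ ‖w (K - 1) • ∑ i ∈ Finset.range K, a i‖ +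
        ‖∑ i ∈ Finset.range (K - 1), (w (i + 1) - w i) • ∑ j ∈ Finset.range (i + 1), a j‖ :=
        norm_sub_le _ _
    _ ≤ w (K - 1) * M + ∑ i ∈ Finset.range (K - 1), (w i - w (i + 1)) * M := by
        gcongr ?_ + ?_
        · rw [norm_smul, Real.norm_eq_abs, abs_of_nonneg (hw0 _)]
          exact mul_le_mul_of_nonneg_left hGK (hw0 _)
        · refine (norm_sum_le _ _).trans (Finset.sum_le_sum fun i hi => ?_)
          rw [norm_smul, Real.norm_eq_abs, abs_of_nonpos (by linarith [hwa i])]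
          have hi' : i + 1 ≤ K := by
            have := Finset.mem_range.mp hi; omega
          have := hM (i + 1) (Nat.le_add_left 1 i) hi'
          have hnn : 0 ≤ w i - w (i + 1) := by linarith [hwa i]
          calc -(w (i + 1) - w i) * ‖∑ j ∈ Finset.range (i + 1), a j‖
              = (w i - w (i + 1)) * ‖∑ j ∈ Finset.range (i + 1), a j‖ := by ring
            _ ≤ (w i - w (i + 1)) * M := mul_le_mul_of_nonneg_left this hnn
    _ = (w (K - 1) + (w 0 - w (K - 1))) * M := by
        rw [← Finset.sum_mul, Finset.sum_range_sub' w (K - 1)]; ring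
    _ ≤ M := by
        have : w (K - 1) + (w 0 - w (K - 1)) = w 0 := by ring
        rw [this]
        calc w 0 * M ≤ 1 * M := mul_le_mul_of_nonneg_right hw1 hM0
          _ = M := one_mul M

theorem smoothed_sum_le_max_partial_sum (f : ℕ → ℂ)
    (hf : ∀ n : ℕ, 1 ≤ n → ‖f n‖ ≤ 1) (y : ℝ) (hy : 1 ≤ y) (δ : ℝ) (hδ : 0 < δ) :
    ‖∑ n ∈ Finset.Icc 1 ⌊y⌋₊, f n / (((n : ℝ) ^ (1 + δ) : ℝ) : ℂ)‖ ≤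
      ⨆ N ∈ Set.Icc (1 : ℝ) y, ‖∑ n ∈ Finset.Icc 1 ⌊N⌋₊, f n / (n : ℂ)‖ := by
  set K := ⌊y⌋₊ with hKdef
  have hK1 : 1 ≤ K := Nat.le_floor (by exact_mod_cast hy)
  have hKy : (K : ℝ) ≤ y := Nat.floor_le (by linarith)
  set h : ℝ → ℝ := fun N => ‖∑ n ∈ Finset.Icc 1 ⌊N⌋₊, f n / (n : ℂ)‖ with hh
  -- each h N is bounded by K
  have hbd : ∀ N : ℝ, N ∈ Set.Icc (1 : ℝ) y → h N ≤ (K : ℝ) := by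
    intro N hN
    have h1 : h N ≤ ∑ n ∈ Finset.Icc 1 ⌊N⌋₊, ‖f n / (n : ℂ)‖ := norm_sum_le _ _
    have h2 : ∀ n ∈ Finset.Icc 1 ⌊N⌋₊, ‖f n / (n : ℂ)‖ ≤ 1 := by
      intro n hn
      have hn1 : 1 ≤ n := (Finset.mem_Icc.mp hn).1
      rw [norm_div]
      have : (1 : ℝ) ≤ ‖(n : ℂ)‖ := by
        rw [Complex.norm_natCast]; exact_mod_cast hn1
      calc ‖f n‖ / ‖(n : ℂ)‖ ≤ 1 / 1 :=
            div_le_div₀ (by norm_num) (hf n hn1) (by norm_num) this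
        _ = 1 := by norm_num
    have h3 : (∑ n ∈ Finset.Icc 1 ⌊N⌋₊, ‖f n / (n : ℂ)‖) ≤ (⌊N⌋₊ : ℝ) := by
      calc (∑ n ∈ Finset.Icc 1 ⌊N⌋₊, ‖f n / (n : ℂ)‖) ≤ ∑ n ∈ Finset.Icc 1 ⌊N⌋₊, (1:ℝ) :=
            Finset.sum_le_sum h2
        _ = ((Finset.Icc 1 ⌊N⌋₊).card : ℝ) := by simp
        _ ≤ (⌊N⌋₊ : ℝ) := by
            simp [Nat.card_Icc]
    have h4 : (⌊N⌋₊ : ℝ) ≤ (K : ℝ) := by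
      exact_mod_cast Nat.floor_le_floor hN.2
    linarith
  have hBdd : BddAbove (Set.range fun N => ⨆ _ : N ∈ Set.Icc (1 : ℝ) y, h N) := by
    refine ⟨(K : ℝ), ?_⟩
    rintro x ⟨N, rfl⟩
    show (⨆ _ : N ∈ Set.Icc (1 : ℝ) y, h N) ≤ (K : ℝ)
    by_cases hN : N ∈ Set.Icc (1 : ℝ) y
    · rw [ciSup_pos hN]; exact hbd N hN
    · have : IsEmpty (N ∈ Set.Icc (1 : ℝ) y) := ⟨hN⟩
      rw [Real.iSup_of_isEmpty]
      positivity
  set M := ⨆ N ∈ Set.Icc (1 : ℝ) y, h N with hM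
  have hle : ∀ m : ℕ, 1 ≤ m → m ≤ K → ‖∑ n ∈ Finset.Icc 1 m, f n / (n : ℂ)‖ ≤ M := by
    intro m hm1 hmK
    have hmem : (m : ℝ) ∈ Set.Icc (1 : ℝ) y := by
      constructor
      · exact_mod_cast hm1
      · calc (m : ℝ) ≤ (K : ℝ) := by exact_mod_cast hmK
          _ ≤ y := hKy
    have h2 : h (m : ℝ) ≤ M := by
      have h3 := le_ciSup hBdd (m : ℝ)
      exact le_of_eq_of_le (ciSup_pos (f := fun _ => h _) hmem).symm h3
    simpa only [hh, Nat.floor_natCast] using h2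
  have hM0 : 0 ≤ M := by
    have hmem : (1 : ℝ) ∈ Set.Icc (1 : ℝ) y := ⟨le_refl 1, hy⟩
    have h1 : h 1 ≤ M := by
      have h3 := le_ciSup hBdd (1 : ℝ)
      exact le_of_eq_of_le (ciSup_pos (f := fun _ => h _) hmem).symm h3
    have : (0 : ℝ) ≤ h 1 := norm_nonneg _
    linarith
  -- rewrite LHS as a range sum with weights
  have key : ∑ n ∈ Finset.Icc 1 K, f n / (((n : ℝ) ^ (1 + δ) : ℝ) : ℂ) =
      ∑ i ∈ Finset.range K, (((i + 1 : ℕ) : ℝ) ^ (-δ)) • (f (i + 1) / ((i + 1 : ℕ) : ℂ)) := by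
    rw [← Finset.Ico_add_one_right_eq_Icc, Finset.sum_Ico_eq_sum_range]
    refine Finset.sum_congr (by rw [Nat.add_sub_cancel]) fun i _ => ?_
    have hx : (0 : ℝ) < ((1 + i : ℕ) : ℝ) := by positivity
    have hrw : ((1 + i : ℕ) : ℝ) ^ (1 + δ) = ((1 + i : ℕ) : ℝ) * ((1 + i : ℕ) : ℝ) ^ δ := by
      rw [Real.rpow_add hx, Real.rpow_one]
    have h1i : (1 + i : ℕ) = (i + 1 : ℕ) := by omega
    rw [h1i] at hrw ⊢
    rw [hrw, Real.rpow_neg (by positivity), Complex.real_smul]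
    have hne : (((i + 1 : ℕ) : ℝ) : ℂ) ≠ 0 := by
      simp only [Complex.ofReal_natCast, ne_eq, Nat.cast_eq_zero]
      omega
    have hne2 : ((((i + 1 : ℕ) : ℝ) ^ δ : ℝ) : ℂ) ≠ 0 := by
      simp only [ne_eq, Complex.ofReal_eq_zero]
      positivity
    rw [Complex.ofReal_mul, Complex.ofReal_inv]
    field_simp
    push_cast
    ring
  rw [key]
  refine abel_bound (fun i => f (i + 1) / ((i + 1 : ℕ) : ℂ))
    (fun i => ((i + 1 : ℕ) : ℝ) ^ (-δ)) M K (fun n => by positivity) ?_ ?_ hM0 ?_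
  · intro n
    have h1 : ((n + 1 : ℕ) : ℝ) ≤ ((n + 1 + 1 : ℕ) : ℝ) := by push_cast; linarith
    have h2 : (0 : ℝ) < ((n + 1 : ℕ) : ℝ) := by positivity
    rw [Real.rpow_neg (by positivity), Real.rpow_neg (by positivity)]
    apply inv_anti₀ (Real.rpow_pos_of_pos h2 δ)
    exact Real.rpow_le_rpow (le_of_lt h2) h1 hδ.le
  · intro m hm1 hmK
    have : ∑ i ∈ Finset.range m, f (i + 1) / ((i + 1 : ℕ) : ℂ) =
        ∑ n ∈ Finset.Icc 1 m, f n / (n : ℂ) := by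
      rw [← Finset.Ico_add_one_right_eq_Icc, Finset.sum_Ico_eq_sum_range]
      refine (Finset.sum_congr (by rw [Nat.add_sub_cancel]) fun i _ => ?_).symm
      rw [Nat.add_comm 1 i]
    rw [this]
    exact hle m hm1 hmK
  · simp
end

section
/- There exists an absolute constant C such that the following holds. Let f : ℕ → ℂ be a completely multiplicative function with |f(n)| ≤ 1 for all n ≥ 1, let 0 < δ ≤ 1/2, and let F(1+δ) := ∑_{n=1}^{∞} f(n)/n^{1+δ}. Then exp(∑_{p ≤ e^{1/δ}} Re f(p)/p − C) ≤ |F(1+δ)| ≤ exp(∑_{p ≤ e^{1/δ}} Re f(p)/p + C), where the sums run over primes p ≤ e^{1/δ}. -/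
open Finset

lemma theta_le (n : ℕ) : ∑ p ∈ (Finset.range (n+1)).filter Nat.Prime, Real.log p ≤ n * Real.log 4 := by
  have h2 : (primorial n : ℝ) ≤ (4:ℝ) ^ n := by exact_mod_cast primorial_le_4_pow n
  have h3 : Real.log (primorial n) ≤ Real.log ((4:ℝ)^n) := by
    apply Real.log_le_log (by exact_mod_cast primorial_pos n) h2
  rw [Real.log_pow] at h3
  have h4 : Real.log (primorial n : ℝ) = ∑ p ∈ (Finset.range (n+1)).filter Nat.Prime, Real.log p := by
    rw [primorial]
    push_cast
    rw [Real.log_prod]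
    intro p hp
    exact_mod_cast (Finset.mem_filter.mp hp).2.pos.ne'
  rw [h4] at h3
  exact h3

lemma cheb (N : ℕ) : ∑ p ∈ (Finset.Icc 1 N).filter Nat.Prime, Real.log p / p ≤ 4 * Real.log N + 4 := by
  rcases Nat.eq_zero_or_pos N with h0 | hN
  · subst h0
    simp
  set J := Nat.log 2 N + 1 with hJ
  have hNJ : N < 2^J := Nat.lt_pow_succ_log_self (by norm_num) _
  have hsub : (Finset.Icc 1 N).filter Nat.Prime ⊆
      (Finset.range J).biUnion (fun j => (Finset.Ioc (2^j) (2^(j+1))).filter Nat.Prime) := by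
    intro p hp
    obtain ⟨hp1, hpP⟩ := Finset.mem_filter.mp hp
    obtain ⟨hp1a, hpN⟩ := Finset.mem_Icc.mp hp1
    have hp2 : 2 ≤ p := hpP.two_le
    set j := Nat.log 2 (p-1) with hj
    have hj1 : 2^j ≤ p - 1 := Nat.pow_log_le_self 2 (by omega)
    have hj2 : p - 1 < 2^(j+1) := Nat.lt_pow_succ_log_self (by norm_num) _
    apply Finset.mem_biUnion.mpr
    refine ⟨j, Finset.mem_range.mpr ?_, Finset.mem_filter.mpr ⟨Finset.mem_Ioc.mpr ⟨by omega, by omega⟩, hpP⟩⟩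
    have h2jJ : 2^j < 2^J := lt_of_le_of_lt hj1 (by omega)
    exact (Nat.pow_lt_pow_iff_right (by norm_num)).mp h2jJ
  have hdisj : (↑(Finset.range J) : Set ℕ).PairwiseDisjoint
      (fun j => (Finset.Ioc (2^j) (2^(j+1))).filter Nat.Prime) := by
    intro i _ j _ hij
    rcases Nat.lt_or_ge i j with h | h
    · apply Finset.disjoint_left.mpr
      intro p hpi hpj
      have h1 := Finset.mem_Ioc.mp (Finset.mem_filter.mp hpi).1
      have h2 := Finset.mem_Ioc.mp (Finset.mem_filter.mp hpj).1
      have : (2:ℕ)^(i+1) ≤ 2^j := Nat.pow_le_pow_right (by norm_num) (by omega)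
      omega
    · have h' : j < i := by omega
      apply Finset.disjoint_right.mpr
      intro p hpi hpj
      have h1 := Finset.mem_Ioc.mp (Finset.mem_filter.mp hpi).1
      have h2 := Finset.mem_Ioc.mp (Finset.mem_filter.mp hpj).1
      have : (2:ℕ)^(j+1) ≤ 2^i := Nat.pow_le_pow_right (by norm_num) (by omega)
      omega
  have hblock : ∀ j : ℕ, ∑ p ∈ (Finset.Ioc (2^j) (2^(j+1))).filter Nat.Prime, Real.log p / p
      ≤ 4 * Real.log 2 := by
    intro j
    have hstep : ∑ p ∈ (Finset.Ioc (2^j) (2^(j+1))).filter Nat.Prime, Real.log p / p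
        ≤ ∑ p ∈ (Finset.Ioc (2^j) (2^(j+1))).filter Nat.Prime, Real.log p / (2^j : ℝ) := by
      apply Finset.sum_le_sum
      intro p hp
      have hp1 := Finset.mem_Ioc.mp (Finset.mem_filter.mp hp).1
      have hple : ((2:ℝ)^j) ≤ (p:ℝ) := by exact_mod_cast (le_of_lt hp1.1)
      exact div_le_div_of_nonneg_left (Real.log_natCast_nonneg p) (by positivity) hple
    have htheta : ∑ p ∈ (Finset.Ioc (2^j) (2^(j+1))).filter Nat.Prime, Real.log p
        ≤ (2^(j+1) : ℕ) * Real.log 4 := by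
      refine le_trans (Finset.sum_le_sum_of_subset_of_nonneg ?_ (fun p _ _ => Real.log_natCast_nonneg p)) (theta_le (2^(j+1)))
      intro p hp
      have hp1 := Finset.mem_Ioc.mp (Finset.mem_filter.mp hp).1
      exact Finset.mem_filter.mpr ⟨Finset.mem_range.mpr (by omega), (Finset.mem_filter.mp hp).2⟩
    calc ∑ p ∈ (Finset.Ioc (2^j) (2^(j+1))).filter Nat.Prime, Real.log p / p
        ≤ ∑ p ∈ (Finset.Ioc (2^j) (2^(j+1))).filter Nat.Prime, Real.log p / (2^j : ℝ) := hstep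
      _ = (∑ p ∈ (Finset.Ioc (2^j) (2^(j+1))).filter Nat.Prime, Real.log p) / (2^j : ℝ) := by
          rw [Finset.sum_div]
      _ ≤ ((2^(j+1) : ℕ) * Real.log 4) / (2^j : ℝ) := by
          gcongr
      _ = 4 * Real.log 2 := by
          push_cast
          rw [pow_succ]
          rw [show (4:ℝ) = 2^2 by norm_num, Real.log_pow]
          field_simp
          ring
  have hlogN : (Nat.log 2 N : ℝ) * Real.log 2 ≤ Real.log N := by
    have h1 : (2:ℕ)^(Nat.log 2 N) ≤ N := Nat.pow_log_le_self 2 hN.ne'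
    have h2 : ((2:ℝ))^(Nat.log 2 N) ≤ (N:ℝ) := by exact_mod_cast h1
    have := Real.log_le_log (by positivity) h2
    rwa [Real.log_pow] at this
  have hlog2 : Real.log 2 ≤ 1 := by
    have := Real.log_le_sub_one_of_pos (by norm_num : (0:ℝ) < 2)
    linarith
  have hlog2n : (0:ℝ) ≤ Real.log 2 := Real.log_nonneg (by norm_num)
  calc ∑ p ∈ (Finset.Icc 1 N).filter Nat.Prime, Real.log p / p
      ≤ ∑ p ∈ (Finset.range J).biUnion
          (fun j => (Finset.Ioc (2^j) (2^(j+1))).filter Nat.Prime), Real.log p / p :=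
        Finset.sum_le_sum_of_subset_of_nonneg hsub
          (fun p _ _ => div_nonneg (Real.log_natCast_nonneg p) (by positivity))
    _ = ∑ j ∈ Finset.range J, ∑ p ∈ (Finset.Ioc (2^j) (2^(j+1))).filter Nat.Prime,
          Real.log p / p := Finset.sum_biUnion hdisj
    _ ≤ ∑ _j ∈ Finset.range J, 4 * Real.log 2 := Finset.sum_le_sum fun j _ => hblock j
    _ = (J:ℝ) * (4 * Real.log 2) := by
        rw [Finset.sum_const, Finset.card_range, nsmul_eq_mul]
    _ ≤ 4 * Real.log N + 4 := by
        have : (J:ℝ) = (Nat.log 2 N : ℝ) + 1 := by rw [hJ]; push_cast; ring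
        rw [this]
        nlinarith

lemma tail_le {δ : ℝ} (hδ : 0 < δ) (hδ2 : δ ≤ 1/2) (v : Finset ℕ)
    (hv : ∀ p ∈ v, p.Prime ∧ Real.exp (1/δ) < (p:ℝ)) :
    ∑ p ∈ v, (((p:ℝ))^(1+δ))⁻¹ ≤ 20 := by
  classical
  set k : ℕ → ℕ := fun p => ⌊δ * Real.log p⌋₊ with hk
  have hk1 : ∀ p ∈ v, 1 ≤ k p := by
    intro p hp
    obtain ⟨hpP, hpx⟩ := hv p hp
    have hp0 : (0:ℝ) < p := by exact_mod_cast hpP.pos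
    have hlog : 1/δ < Real.log p := (Real.lt_log_iff_exp_lt hp0).mpr hpx
    have : (1:ℝ) ≤ δ * Real.log p := by
      rw [div_lt_iff₀ hδ] at hlog
      nlinarith
    exact Nat.le_floor (by exact_mod_cast this)
  have hmaps : ∀ p ∈ v, k p ∈ v.image k := fun p hp => Finset.mem_image_of_mem k hp
  rw [← Finset.sum_fiberwise_of_maps_to hmaps (fun p => (((p:ℝ))^(1+δ))⁻¹)]
  have hfiber : ∀ j ∈ v.image k, ∑ p ∈ v.filter (fun p => k p = j), (((p:ℝ))^(1+δ))⁻¹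
      ≤ 10 * Real.exp (-(1:ℝ)) ^ j := by
    intro j hj
    obtain ⟨q, hqv, hqj⟩ := Finset.mem_image.mp hj
    have hj1 : 1 ≤ j := hqj ▸ hk1 q hqv
    have hJ1 : (1:ℝ) ≤ (j:ℝ) := by exact_mod_cast hj1
    set Nj := ⌊Real.exp (((j:ℝ)+1)/δ)⌋₊ with hNj
    have hterm : ∀ p ∈ v.filter (fun p => k p = j),
        (((p:ℝ))^(1+δ))⁻¹ ≤ Real.exp (-(j:ℝ)) * ((δ/j) * (Real.log p / p)) := by
      intro p hp
      obtain ⟨hpv, hpj⟩ := Finset.mem_filter.mp hp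
      obtain ⟨hpP, hpx⟩ := hv p hpv
      have hp0 : (0:ℝ) < p := by exact_mod_cast hpP.pos
      have hjle : (j:ℝ) ≤ δ * Real.log p := by
        rw [← hpj]
        exact Nat.floor_le (by positivity)
      have hlogp : 0 < Real.log p := by
        have : (1:ℝ) < p := by exact_mod_cast hpP.one_lt
        exact Real.log_pos this
      have hsplit : (((p:ℝ))^(1+δ))⁻¹ = Real.exp (-(δ * Real.log p)) * (p:ℝ)⁻¹ := by
        rw [Real.rpow_def_of_pos hp0, ← Real.exp_neg]
        rw [show Real.log p * (1+δ) = δ * Real.log p + Real.log p by ring]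
        rw [neg_add, Real.exp_add, Real.exp_neg (Real.log p), Real.exp_log hp0]
      rw [hsplit]
      have h1 : Real.exp (-(δ * Real.log p)) ≤ Real.exp (-(j:ℝ)) :=
        Real.exp_le_exp.mpr (by linarith)
      have h2 : (p:ℝ)⁻¹ ≤ (δ/j) * (Real.log p / p) := by
        rw [div_mul_div_comm, inv_eq_one_div, div_le_div_iff₀ hp0 (by positivity)]
        nlinarith
      exact mul_le_mul h1 h2 (by positivity) (by positivity)
    have hsubNj : v.filter (fun p => k p = j) ⊆ (Finset.Icc 1 Nj).filter Nat.Prime := by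
      intro p hp
      obtain ⟨hpv, hpj⟩ := Finset.mem_filter.mp hp
      obtain ⟨hpP, hpx⟩ := hv p hpv
      have hp0 : (0:ℝ) < p := by exact_mod_cast hpP.pos
      have hlt : δ * Real.log p < (j:ℝ) + 1 := by
        rw [← hpj]
        exact Nat.lt_floor_add_one _
      have hplt : (p:ℝ) ≤ Real.exp (((j:ℝ)+1)/δ) := by
        rw [← Real.exp_log hp0]
        apply Real.exp_le_exp.mpr
        rw [le_div_iff₀ hδ]
        nlinarith
      exact Finset.mem_filter.mpr ⟨Finset.mem_Icc.mpr ⟨hpP.one_lt.le, Nat.le_floor hplt⟩, hpP⟩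
    have hchebNj : ∑ p ∈ v.filter (fun p => k p = j), Real.log p / p ≤ 4 * (((j:ℝ)+1)/δ) + 4 := by
      refine le_trans (le_trans (Finset.sum_le_sum_of_subset_of_nonneg hsubNj
        (fun p _ _ => div_nonneg (Real.log_natCast_nonneg p) (by positivity))) (cheb Nj)) ?_
      have hlogNj : Real.log Nj ≤ ((j:ℝ)+1)/δ := by
        rcases Nat.eq_zero_or_pos Nj with h0 | hpos
        · rw [h0]; simp; positivity
        · have h1 : (Nj:ℝ) ≤ Real.exp (((j:ℝ)+1)/δ) := Nat.floor_le (by positivity)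
          have := Real.log_le_log (by exact_mod_cast hpos) h1
          rwa [Real.log_exp] at this
      linarith
    calc ∑ p ∈ v.filter (fun p => k p = j), (((p:ℝ))^(1+δ))⁻¹
        ≤ ∑ p ∈ v.filter (fun p => k p = j), Real.exp (-(j:ℝ)) * ((δ/j) * (Real.log p / p)) :=
          Finset.sum_le_sum hterm
      _ = Real.exp (-(j:ℝ)) * (δ/j) * ∑ p ∈ v.filter (fun p => k p = j), Real.log p / p := by
          rw [Finset.mul_sum]
          congr 1
          ext p
          ring
      _ ≤ Real.exp (-(j:ℝ)) * (δ/j) * (4 * (((j:ℝ)+1)/δ) + 4) := by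
          apply mul_le_mul_of_nonneg_left hchebNj (by positivity)
      _ ≤ 10 * Real.exp (-(1:ℝ)) ^ j := by
          have hexp : Real.exp (-(j:ℝ)) = Real.exp (-(1:ℝ)) ^ j := by
            rw [← Real.exp_nat_mul]
            congr 1
            push_cast
            ring
          rw [hexp]
          rw [(by ring : Real.exp (-(1:ℝ)) ^ j * (δ/(j:ℝ)) * (4 * (((j:ℝ)+1)/δ) + 4)
            = (δ/(j:ℝ) * (4 * (((j:ℝ)+1)/δ) + 4)) * Real.exp (-(1:ℝ)) ^ j)]
          refine mul_le_mul_of_nonneg_right ?_ (by positivity)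
          have hδj : δ/(j:ℝ) * (4 * (((j:ℝ)+1)/δ) + 4) = (4*((j:ℝ)+1) + 4*δ)/(j:ℝ) := by
            field_simp
          rw [hδj, div_le_iff₀ (by linarith)]
          nlinarith
  have hr : Real.exp (-(1:ℝ)) < 1/2 := by
    rw [Real.exp_neg]
    rw [inv_lt_comm₀ (Real.exp_pos 1) (by norm_num)]
    have := Real.exp_one_gt_d9
    norm_num
    linarith
  have hr0 : (0:ℝ) ≤ Real.exp (-(1:ℝ)) := le_of_lt (Real.exp_pos _)
  calc ∑ j ∈ v.image k, ∑ p ∈ v.filter (fun p => k p = j), (((p:ℝ))^(1+δ))⁻¹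
      ≤ ∑ j ∈ v.image k, 10 * Real.exp (-(1:ℝ)) ^ j := Finset.sum_le_sum hfiber
    _ = 10 * ∑ j ∈ v.image k, Real.exp (-(1:ℝ)) ^ j := by rw [Finset.mul_sum]
    _ ≤ 10 * (1 - Real.exp (-(1:ℝ)))⁻¹ := by
        refine mul_le_mul_of_nonneg_left ?_ (by norm_num)
        have hsum : ∑ j ∈ v.image k, Real.exp (-(1:ℝ)) ^ j
            ≤ ∑' j : ℕ, Real.exp (-(1:ℝ)) ^ j :=
          Summable.sum_le_tsum _ (fun i _ => by positivity)
            (summable_geometric_of_lt_one hr0 (by linarith))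
        rwa [tsum_geometric_of_lt_one hr0 (by linarith)] at hsum
    _ ≤ 20 := by
        rw [(by norm_num : (20:ℝ) = 10 * 2)]
        refine mul_le_mul_of_nonneg_left ?_ (by norm_num)
        rw [inv_le_comm₀ (by linarith) (by norm_num)]
        linarith

theorem euler_product_estimate :
    ∃ C : ℝ, ∀ f : ℕ → ℂ, (∀ m n : ℕ, f (m * n) = f m * f n) → f 1 = 1 →
      (∀ n : ℕ, 1 ≤ n → ‖f n‖ ≤ 1) →
      ∀ δ : ℝ, 0 < δ → δ ≤ 1 / 2 →
        Real.exp ((∑ p ∈ (Finset.Icc 1 ⌊Real.exp (1 / δ)⌋₊).filter Nat.Prime,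
              (f p).re / p) - C) ≤
            ‖∑' n : ℕ, f (n + 1) / ((((n : ℝ) + 1) ^ (1 + δ) : ℝ) : ℂ)‖ ∧
          ‖∑' n : ℕ, f (n + 1) / ((((n : ℝ) + 1) ^ (1 + δ) : ℝ) : ℂ)‖ ≤
            Real.exp ((∑ p ∈ (Finset.Icc 1 ⌊Real.exp (1 / δ)⌋₊).filter Nat.Prime,
              (f p).re / p) + C) := by
  refine ⟨30, ?_⟩
  intro f hmul hf1 hnorm δ hδ hδ2
  have h1δ : (0:ℝ) < 1 + δ := by linarith
  set G : ℕ →*₀ ℂ :=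
    { toFun := fun n => f n * ((((n:ℝ) ^ (1+δ) : ℝ)) : ℂ)⁻¹,
      map_zero' := by
        simp [Real.zero_rpow (ne_of_gt h1δ)]
      map_one' := by simp [hf1]
      map_mul' := by
        intro m n
        rw [hmul, Nat.cast_mul, Real.mul_rpow (by positivity) (by positivity)]
        push_cast
        rw [mul_inv]
        ring } with hGdef
  have hGval : ∀ n : ℕ, G n = f n * ((((n:ℝ) ^ (1+δ) : ℝ)) : ℂ)⁻¹ := fun n => rfl
  have hGnorm : ∀ n : ℕ, ‖G n‖ ≤ (((n:ℝ)) ^ (1+δ))⁻¹ := by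
    intro n
    rcases Nat.eq_zero_or_pos n with h0 | hn
    · subst h0
      simp [hGval, Real.zero_rpow (ne_of_gt h1δ)]
    · rw [hGval, norm_mul]
      have h2 : ‖((((n:ℝ) ^ (1+δ) : ℝ)) : ℂ)⁻¹‖ = (((n:ℝ)) ^ (1+δ))⁻¹ := by
        rw [norm_inv, Complex.norm_real, Real.norm_eq_abs, abs_of_nonneg (by positivity)]
      rw [h2]
      have := hnorm n hn
      nlinarith [norm_nonneg (f n), inv_nonneg.mpr (Real.rpow_nonneg (Nat.cast_nonneg n) (1+δ))]
  have hmaj : Summable (fun n : ℕ => (((n:ℝ)) ^ (1+δ))⁻¹) :=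
    Real.summable_nat_rpow_inv.mpr (by linarith)
  have hsum : Summable (fun n => ‖G n‖) :=
    Summable.of_nonneg_of_le (fun n => norm_nonneg _) hGnorm hmaj
  have heuler : Complex.exp (∑' p : Nat.Primes, -Complex.log (1 - G p)) = ∑' n : ℕ, G n :=
    EulerProduct.exp_tsum_primes_log_eq_tsum (f := G) hsum
  have hFG : ∑' n : ℕ, f (n + 1) / ((((n : ℝ) + 1) ^ (1 + δ) : ℝ) : ℂ) = ∑' n : ℕ, G n := by
    rw [Summable.tsum_eq_zero_add hsum.of_norm]
    have hG0 : G 0 = 0 := map_zero G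
    rw [hG0, zero_add]
    apply tsum_congr
    intro n
    rw [hGval, div_eq_mul_inv]
    push_cast
    ring_nf
  have hlogsum : Summable (fun p : Nat.Primes => -Complex.log (1 - G p)) :=
    hsum.of_norm.clog_one_sub.neg.subtype {p | p.Prime}
  set R := ∑' p : Nat.Primes, (-Complex.log (1 - G p)).re with hR
  have hnormF : ‖∑' n : ℕ, f (n + 1) / ((((n : ℝ) + 1) ^ (1 + δ) : ℝ) : ℂ)‖ = Real.exp R := by
    rw [hFG, ← heuler, Complex.norm_exp, Complex.re_tsum hlogsum]
  -- basic prime norms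
  have hprime_norm : ∀ p : ℕ, p.Prime → ‖G p‖ ≤ ((p:ℝ))⁻¹ ∧ ‖G p‖ ≤ 1/2 := by
    intro p hp
    have hp2 : (2:ℝ) ≤ (p:ℝ) := by exact_mod_cast hp.two_le
    have hp1 : (1:ℝ) ≤ (p:ℝ) := by linarith
    have h1 : ((p:ℝ)) ^ ((1:ℝ)) ≤ ((p:ℝ)) ^ (1+δ) :=
      Real.rpow_le_rpow_of_exponent_le hp1 (by linarith)
    rw [Real.rpow_one] at h1
    have h2 : (((p:ℝ)) ^ (1+δ))⁻¹ ≤ ((p:ℝ))⁻¹ := by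
      apply inv_anti₀ (by linarith) h1
    have h3 : ‖G p‖ ≤ ((p:ℝ))⁻¹ := le_trans (hGnorm p) h2
    refine ⟨h3, le_trans h3 ?_⟩
    have h12 : (2:ℝ)⁻¹ = 1/2 := by norm_num
    rw [← h12]
    exact inv_anti₀ (by norm_num) hp2
  -- error term bound
  have herr : ∀ p : Nat.Primes,
      |(-Complex.log (1 - G p)).re - (G p).re| ≤ (((p:ℕ):ℝ)^2)⁻¹ := by
    intro p
    obtain ⟨hn1, hn2⟩ := hprime_norm p p.prop
    have hz1 : ‖G (p:ℕ)‖ < 1 := lt_of_le_of_lt hn2 (by norm_num)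
    have hlog_eq : -Complex.log (1 - G p) = Complex.log (1 - G p)⁻¹ := by
      rw [Complex.log_inv]
      apply Complex.slitPlane_arg_ne_pi
      have : (1 : ℂ) - G p = 1 + (-(G p)) := by ring
      rw [this]
      exact Complex.mem_slitPlane_of_norm_lt_one (by rwa [norm_neg])
    rw [hlog_eq]
    have hb := Complex.norm_log_one_sub_inv_sub_self_le hz1
    have hinv2 : (1 - ‖G (p:ℕ)‖)⁻¹ ≤ 2 := by
      rw [inv_le_comm₀ (by linarith) (by norm_num)]
      linarith
    have hp2 : (2:ℝ) ≤ ((p:ℕ):ℝ) := by exact_mod_cast p.prop.two_le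
    calc |(Complex.log (1 - G p)⁻¹).re - (G p).re|
        = |(Complex.log (1 - G p)⁻¹ - G p).re| := by rw [Complex.sub_re]
      _ ≤ ‖Complex.log (1 - G p)⁻¹ - G p‖ := Complex.abs_re_le_norm _
      _ ≤ ‖G (p:ℕ)‖^2 * (1 - ‖G (p:ℕ)‖)⁻¹ / 2 := hb
      _ ≤ (((p:ℕ):ℝ))⁻¹^2 * 2 / 2 := by
          refine div_le_div_of_nonneg_right ?_ (by norm_num)
          exact mul_le_mul (by nlinarith [norm_nonneg (G (p:ℕ))]) hinv2
            (inv_nonneg.mpr (by linarith)) (by positivity)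
      _ ≤ (((p:ℕ):ℝ)^2)⁻¹ := by
          rw [mul_div_assoc]
          norm_num [inv_pow]
  -- summability facts
  have hGsub : Summable (fun p : Nat.Primes => G (p:ℕ)) :=
    hsum.of_norm.subtype {p : ℕ | p.Prime}
  have hre : Summable (fun p : Nat.Primes => (G (p:ℕ)).re) :=
    (Complex.hasSum_re hGsub.hasSum).summable
  have hmaj2 : Summable (fun p : Nat.Primes => ((((p:ℕ)):ℝ)^2)⁻¹) :=
    (Real.summable_nat_pow_inv.mpr one_lt_two).subtype {p : ℕ | p.Prime}
  have herrS : Summable (fun p : Nat.Primes => (-Complex.log (1 - G p)).re - (G p).re) := by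
    refine Summable.of_norm_bounded hmaj2 ?_
    intro p
    rw [Real.norm_eq_abs]
    exact herr p
  have hRsplit : R = (∑' p : Nat.Primes, (G (p:ℕ)).re)
      + ∑' p : Nat.Primes, ((-Complex.log (1 - G p)).re - (G p).re) := by
    rw [hR, ← Summable.tsum_add hre herrS]
    apply tsum_congr
    intro p
    ring
  have hE : |∑' p : Nat.Primes, ((-Complex.log (1 - G p)).re - (G p).re)| ≤ 2 := by
    have h1 : |∑' p : Nat.Primes, ((-Complex.log (1 - G p)).re - (G p).re)|
        ≤ ∑' p : Nat.Primes, |(-Complex.log (1 - G p)).re - (G p).re| := by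
      simpa [Real.norm_eq_abs] using norm_tsum_le_tsum_norm
        (f := fun p : Nat.Primes => (-Complex.log (1 - G p)).re - (G p).re)
        (by simpa [Real.norm_eq_abs] using herrS.abs)
    have h2 : ∑' p : Nat.Primes, |(-Complex.log (1 - G p)).re - (G p).re|
        ≤ ∑' p : Nat.Primes, ((((p:ℕ)):ℝ)^2)⁻¹ := Summable.tsum_le_tsum herr herrS.abs hmaj2
    have h3 : ∑' p : Nat.Primes, ((((p:ℕ)):ℝ)^2)⁻¹ ≤ ∑' n : ℕ, (((n:ℝ))^2)⁻¹ := by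
      have hconv : ∑' p : Nat.Primes, ((((p:ℕ)):ℝ)^2)⁻¹
          = ∑' x : ↑{p : ℕ | Nat.Prime p}, ((((x:ℕ)):ℝ)^2)⁻¹ :=
        (Equiv.subtypeEquivRight (fun p => Iff.rfl)).tsum_eq
          (fun x : ↑{p : ℕ | Nat.Prime p} => ((((x:ℕ)):ℝ)^2)⁻¹)
      rw [hconv, tsum_subtype {p : ℕ | Nat.Prime p} (fun n : ℕ => (((n:ℝ))^2)⁻¹)]
      refine Summable.tsum_le_tsum ?_
        ((Real.summable_nat_pow_inv.mpr one_lt_two).indicator _)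
        (Real.summable_nat_pow_inv.mpr one_lt_two)
      intro n
      exact Set.indicator_le_self' (fun x _ => by positivity) n
    have h4 : ∑' n : ℕ, (((n:ℝ))^2)⁻¹ = Real.pi^2/6 := by
      rw [← hasSum_zeta_two.tsum_eq]
      apply tsum_congr
      intro n
      rw [one_div]
    have h5 : Real.pi^2/6 ≤ 2 := by nlinarith [Real.pi_lt_d2, Real.pi_pos]
    linarith
  -- restriction to an indicator function on ℕ
  set x₀ := ⌊Real.exp (1/δ)⌋₊ with hx₀
  set T : Finset ℕ := Finset.Icc 1 x₀ with hT
  set A : ℕ → ℝ := fun n => if n.Prime then (G n).re else 0 with hA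
  have hPA : ∑' p : Nat.Primes, (G (p:ℕ)).re = ∑' n : ℕ, A n := by
    have hconv : ∑' p : Nat.Primes, (G (p:ℕ)).re
        = ∑' x : ↑{p : ℕ | Nat.Prime p}, (G (x:ℕ)).re :=
      (Equiv.subtypeEquivRight (fun p => Iff.rfl)).tsum_eq
        (fun x : ↑{p : ℕ | Nat.Prime p} => (G (x:ℕ)).re)
    rw [hconv, tsum_subtype {p : ℕ | Nat.Prime p} (fun n : ℕ => (G n).re)]
    apply tsum_congr
    intro n
    simp [Set.indicator_apply, hA, Set.mem_setOf_eq]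
  have hAbound : ∀ n : ℕ, ‖A n‖ ≤ (((n:ℝ))^(1+δ))⁻¹ := by
    intro n
    rw [hA]
    dsimp only
    split_ifs with h
    · rw [Real.norm_eq_abs]
      exact le_trans (Complex.abs_re_le_norm _) (hGnorm n)
    · simp
      positivity
  have hAsum : Summable A := Summable.of_norm_bounded hmaj hAbound
  have hsplitA : ∑' n : ℕ, A n = (∑ n ∈ T, A n) + ∑' n : ((T : Set ℕ)ᶜ : Set ℕ), A n :=
    (Summable.sum_add_tsum_compl hAsum).symm
  -- x₀ facts
  have hx₀1 : 1 ≤ x₀ := by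
    apply Nat.le_floor
    push_cast
    exact Real.one_le_exp (by positivity)
  have hx₀pos : (0:ℝ) < x₀ := by exact_mod_cast hx₀1
  have hlogx₀ : Real.log x₀ ≤ 1/δ := by
    have h1 : (x₀:ℝ) ≤ Real.exp (1/δ) := Nat.floor_le (le_of_lt (Real.exp_pos _))
    have := Real.log_le_log hx₀pos h1
    rwa [Real.log_exp] at this
  -- small prime estimate
  have hsmall : |(∑ n ∈ T, A n) - ∑ p ∈ T.filter Nat.Prime, (f p).re / p| ≤ 6 := by
    have hTA : ∑ n ∈ T, A n = ∑ p ∈ T.filter Nat.Prime, (G p).re :=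
      (Finset.sum_filter Nat.Prime (fun p => (G p).re)).symm
    rw [hTA, ← Finset.sum_sub_distrib]
    have hterm : ∀ p ∈ T.filter Nat.Prime, |(G p).re - (f p).re / p| ≤ δ * (Real.log p / p) := by
      intro p hp
      have hpP : p.Prime := (Finset.mem_filter.mp hp).2
      have hp0 : (0:ℝ) < p := by exact_mod_cast hpP.pos
      have hp1 : (1:ℝ) ≤ (p:ℝ) := by exact_mod_cast hpP.one_lt.le
      have hGre : (G p).re = (f p).re * (((p:ℝ)^(1+δ))⁻¹) := by
        have heq : G p = f p * ((((((p:ℝ))^(1+δ))⁻¹ : ℝ)) : ℂ) := by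
          rw [hGval, Complex.ofReal_inv]
        rw [heq, Complex.mul_re, Complex.ofReal_re, Complex.ofReal_im]
        simp
      have hsplitp : (((p:ℝ))^(1+δ))⁻¹ = (p:ℝ)⁻¹ * Real.exp (-(δ * Real.log p)) := by
        rw [Real.rpow_def_of_pos hp0,
          (by ring : Real.log p * (1+δ) = Real.log p + δ * Real.log p),
          Real.exp_add, mul_inv, Real.exp_log hp0, ← Real.exp_neg]
      have hexp1 : 1 - Real.exp (-(δ * Real.log p)) ≤ δ * Real.log p := by
        have := Real.add_one_le_exp (-(δ * Real.log p))
        linarith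
      have hexp0 : Real.exp (-(δ * Real.log p)) ≤ 1 := by
        rw [Real.exp_le_one_iff]
        have := Real.log_nonneg hp1
        nlinarith
      have hfre : |(f p).re| ≤ 1 :=
        le_trans (Complex.abs_re_le_norm _) (hnorm p hpP.pos)
      rw [hGre, div_eq_mul_inv, ← mul_sub, abs_mul]
      have hdiff : |(((p:ℝ))^(1+δ))⁻¹ - (p:ℝ)⁻¹| ≤ δ * (Real.log p / p) := by
        rw [hsplitp, abs_sub_comm,
          (by ring : (p:ℝ)⁻¹ - (p:ℝ)⁻¹ * Real.exp (-(δ * Real.log p))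
            = (p:ℝ)⁻¹ * (1 - Real.exp (-(δ * Real.log p)))), abs_mul]
        have h01 : 0 ≤ 1 - Real.exp (-(δ * Real.log p)) := by linarith
        rw [abs_of_nonneg (by positivity : (0:ℝ) ≤ (p:ℝ)⁻¹), abs_of_nonneg h01]
        rw [div_eq_mul_inv]
        calc (p:ℝ)⁻¹ * (1 - Real.exp (-(δ * Real.log p)))
            ≤ (p:ℝ)⁻¹ * (δ * Real.log p) := by
              apply mul_le_mul_of_nonneg_left hexp1 (by positivity)
          _ = δ * (Real.log p * (p:ℝ)⁻¹) := by ring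
      calc |(f p).re| * |(((p:ℝ))^(1+δ))⁻¹ - (p:ℝ)⁻¹|
          ≤ 1 * (δ * (Real.log p / p)) := by
            apply mul_le_mul hfre hdiff (abs_nonneg _) (by norm_num)
        _ = δ * (Real.log p / p) := by ring
    calc |∑ p ∈ T.filter Nat.Prime, ((G p).re - (f p).re / p)|
        ≤ ∑ p ∈ T.filter Nat.Prime, |(G p).re - (f p).re / p| :=
          Finset.abs_sum_le_sum_abs _ _
      _ ≤ ∑ p ∈ T.filter Nat.Prime, δ * (Real.log p / p) := Finset.sum_le_sum hterm
      _ = δ * ∑ p ∈ T.filter Nat.Prime, Real.log p / p := by rw [Finset.mul_sum]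
      _ ≤ δ * (4 * Real.log x₀ + 4) := mul_le_mul_of_nonneg_left (cheb x₀) (le_of_lt hδ)
      _ ≤ 6 := by
          have hd : δ * Real.log (x₀:ℝ) ≤ 1 := by
            have h := mul_le_mul_of_nonneg_left hlogx₀ hδ.le
            rwa [mul_one_div, div_self hδ.ne'] at h
          nlinarith
  -- tail estimate
  have htail : |∑' n : ((T : Set ℕ)ᶜ : Set ℕ), A n| ≤ 20 := by
    have hsub : Summable (fun n : ((T : Set ℕ)ᶜ : Set ℕ) => A n) := hAsum.subtype _
    have habs : Summable (fun n : ((T : Set ℕ)ᶜ : Set ℕ) => |A n|) := hsub.abs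
    have h1 : |∑' n : ((T : Set ℕ)ᶜ : Set ℕ), A n|
        ≤ ∑' n : ((T : Set ℕ)ᶜ : Set ℕ), |A n| := by
      simpa [Real.norm_eq_abs] using norm_tsum_le_tsum_norm
        (f := fun n : ((T : Set ℕ)ᶜ : Set ℕ) => A n) (by simpa [Real.norm_eq_abs] using habs)
    refine le_trans h1 (Summable.tsum_le_of_sum_le habs ?_)
    intro u
    have himg : ∑ n ∈ u.image (fun i : ((T : Set ℕ)ᶜ : Set ℕ) => (i : ℕ)), |A n|
        = ∑ i ∈ u, |A (i:ℕ)| :=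
      Finset.sum_image (fun x _ y _ h => Subtype.ext h)
    rw [← himg]
    set w := u.image (fun i : ((T : Set ℕ)ᶜ : Set ℕ) => (i : ℕ)) with hw
    have hwT : ∀ n ∈ w, n ∉ T := by
      intro n hn
      obtain ⟨i, _, hi⟩ := Finset.mem_image.mp hn
      rw [← hi]
      exact i.prop
    rw [← Finset.sum_filter_of_ne (p := Nat.Prime) (by
      intro x _ hx
      by_contra hnp
      apply hx
      rw [hA]
      simp [hnp])]
    have hbound : ∀ p ∈ w.filter Nat.Prime, |A p| ≤ (((p:ℝ))^(1+δ))⁻¹ := by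
      intro p hp
      have := hAbound p
      rwa [Real.norm_eq_abs] at this
    refine le_trans (Finset.sum_le_sum hbound) (tail_le hδ hδ2 _ ?_)
    intro p hp
    obtain ⟨hpw, hpP⟩ := Finset.mem_filter.mp hp
    refine ⟨hpP, ?_⟩
    have hnT : p ∉ T := hwT p hpw
    rw [hT, Finset.mem_Icc] at hnT
    push_neg at hnT
    have hpx : x₀ < p := hnT hpP.one_lt.le
    have h1 : Real.exp (1/δ) < (x₀:ℝ) + 1 := Nat.lt_floor_add_one _
    have h2 : ((x₀:ℝ)) + 1 ≤ (p:ℝ) := by exact_mod_cast hpx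
    linarith
  -- conclusion
  set S := ∑ p ∈ T.filter Nat.Prime, (f p).re / (p:ℝ) with hS
  have hRS : |R - S| ≤ 28 := by
    rw [hRsplit, hPA, hsplitA]
    have : ∑ n ∈ T, A n + ∑' n : ((T : Set ℕ)ᶜ : Set ℕ), A n
        + ∑' p : Nat.Primes, ((-Complex.log (1 - G p)).re - (G p).re) - S
        = ((∑ n ∈ T, A n) - S) + (∑' n : ((T : Set ℕ)ᶜ : Set ℕ), A n)
        + ∑' p : Nat.Primes, ((-Complex.log (1 - G p)).re - (G p).re) := by ring
    rw [this]
    calc |((∑ n ∈ T, A n) - S) + (∑' n : ((T : Set ℕ)ᶜ : Set ℕ), A n)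
        + ∑' p : Nat.Primes, ((-Complex.log (1 - G p)).re - (G p).re)|
        ≤ |((∑ n ∈ T, A n) - S) + (∑' n : ((T : Set ℕ)ᶜ : Set ℕ), A n)|
          + |∑' p : Nat.Primes, ((-Complex.log (1 - G p)).re - (G p).re)| := abs_add_le _ _
      _ ≤ |(∑ n ∈ T, A n) - S| + |∑' n : ((T : Set ℕ)ᶜ : Set ℕ), A n|
          + |∑' p : Nat.Primes, ((-Complex.log (1 - G p)).re - (G p).re)| := by
          have := abs_add_le ((∑ n ∈ T, A n) - S) (∑' n : ((T : Set ℕ)ᶜ : Set ℕ), A n)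
          linarith
      _ ≤ 6 + 20 + 2 := by
          have h1 := hsmall
          have h2 := htail
          have h3 := hE
          linarith
      _ = 28 := by norm_num
  obtain ⟨hRS1, hRS2⟩ := abs_le.mp hRS
  constructor
  · rw [hnormF]
    apply Real.exp_le_exp.mpr
    linarith
  · rw [hnormF]
    apply Real.exp_le_exp.mpr
    linarith
end

section
/- There exist absolute constants c > 0 and y_0 such that the following holds. Let f : ℕ → ℂ be a completely multiplicative function with |f(n)| ≤ 1 for all n ≥ 1, let y ≥ y_0 be a real number, and set δ := (log log y)/(log y). Then |∑_{n=1}^{∞} f(n)/n^{1+δ}| ≥ c · (log y / log log y) · exp(−D(f,1; y)²). -/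
open Finset

lemma norm_sq_complex (z : ℂ) : ‖z‖^2 = z.re^2 + z.im^2 := by
  rw [Complex.sq_norm, Complex.normSq_apply]; ring

lemma aux_key {w : ℂ} (hw : ‖w‖ ≤ 1) {t : ℝ} (ht0 : 0 ≤ t) (ht : t ≤ 1/2) :
    ‖1 - w * (t:ℂ)‖ ≤ (1 - t) * Real.exp ((1 - w.re) * t + 12 * t^2) := by
  set a := w.re with ha
  have hre : a^2 + w.im^2 ≤ 1 := by
    have h1 : ‖w‖^2 ≤ 1 := by nlinarith [norm_nonneg w]
    rwa [norm_sq_complex] at h1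
  have ha1 : a ≤ 1 := by nlinarith [sq_nonneg w.im]
  have ha1' : -1 ≤ a := by nlinarith [sq_nonneg w.im]
  have hX : (0:ℝ) ≤ (1 - a) * t + 12 * t^2 := by nlinarith
  have hexp : 1 + 2*((1 - a) * t + 12 * t^2) ≤ Real.exp ((1 - a) * t + 12 * t^2) ^ 2 := by
    have he : Real.exp ((1 - a) * t + 12 * t^2) ^ 2 = Real.exp (((1 - a) * t + 12 * t^2) + ((1 - a) * t + 12 * t^2)) := by
      rw [sq, ← Real.exp_add]
    rw [he]
    have := Real.add_one_le_exp (((1 - a) * t + 12 * t^2) + ((1 - a) * t + 12 * t^2))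
    linarith
  have hnsq : ‖1 - w * (t:ℂ)‖^2 = (1 - t*a)^2 + (t*w.im)^2 := by
    rw [norm_sq_complex]
    simp [Complex.sub_re, Complex.sub_im, Complex.mul_re, Complex.mul_im]
    ring
  have h1t : (0:ℝ) ≤ 1 - t := by linarith
  have hrhs0 : 0 ≤ (1 - t) * Real.exp ((1 - a) * t + 12 * t^2) :=
    mul_nonneg h1t (Real.exp_nonneg _)
  have hq : 0 ≤ 24*(1-t)^2 - 2*(1-a)*(2-t) := by nlinarith [mul_nonneg (by linarith : (0:ℝ) ≤ 1 - 2*t) (by linarith : (0:ℝ) ≤ 4 - 3*t)]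
  have hq' : 0 ≤ t^2 * (24*(1-t)^2 - 2*(1-a)*(2-t)) := mul_nonneg (sq_nonneg t) hq
  have ht2 : t^2*(a^2+w.im^2) ≤ t^2 := by nlinarith [sq_nonneg t]
  have hsq : ‖1 - w * (t:ℂ)‖^2 ≤ ((1 - t) * Real.exp ((1 - a) * t + 12 * t^2))^2 := by
    rw [hnsq]
    conv_rhs => rw [mul_pow]
    have h2 : (1 - t)^2 * (1 + 2*((1 - a) * t + 12 * t^2)) ≤
        (1 - t)^2 * Real.exp ((1 - a) * t + 12 * t^2)^2 :=
      mul_le_mul_of_nonneg_left hexp (by positivity)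
    refine le_trans ?_ h2
    nlinarith [hq', ht2]
  nlinarith [hsq, norm_nonneg (1 - w * (t:ℂ)), hrhs0]


lemma aux_step {d : ℝ} (hd : 0 < d) {x : ℝ} (hx : 1 ≤ x) :
    (x+1)^(-(1+d)) ≤ (x^(-d) - (x+1)^(-d)) / d := by
  rw [le_div_iff₀ hd]
  have hx0 : (0:ℝ) < x := by linarith
  have hx1 : (0:ℝ) < x + 1 := by linarith
  have hlog : 1/(x+1) ≤ Real.log (x+1) - Real.log x := by
    have h := Real.log_le_sub_one_of_pos (show (0:ℝ) < x/(x+1) by positivity)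
    rw [Real.log_div (ne_of_gt hx0) (ne_of_gt hx1)] at h
    have : x/(x+1) - 1 = -(1/(x+1)) := by field_simp; ring
    rw [this] at h
    linarith
  have hxe : x^(-d) = Real.exp (-d * Real.log x) := by
    rw [Real.rpow_def_of_pos hx0]; ring_nf
  have hxe1 : (x+1)^(-d) = Real.exp (-d * Real.log (x+1)) := by
    rw [Real.rpow_def_of_pos hx1]; ring_nf
  have hkey : (x+1)^(-d) * (d * (Real.log (x+1) - Real.log x)) ≤ x^(-d) - (x+1)^(-d) := by
    rw [hxe, hxe1]
    have h2 : Real.exp (-d * Real.log x) = Real.exp (-d * Real.log (x+1)) *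
        Real.exp (d * (Real.log (x+1) - Real.log x)) := by
      rw [← Real.exp_add]; ring_nf
    rw [h2]
    have h3 := Real.add_one_le_exp (d * (Real.log (x+1) - Real.log x))
    have h4 : (0:ℝ) < Real.exp (-d * Real.log (x+1)) := Real.exp_pos _
    nlinarith
  have hfin : d * (x+1)^(-(1+d)) ≤ (x+1)^(-d) * (d * (Real.log (x+1) - Real.log x)) := by
    have h5 : (x+1)^(-(1+d)) = (x+1)^(-d) * (x+1)⁻¹ := by
      rw [← Real.rpow_neg_one (x+1), ← Real.rpow_add hx1]; ring_nf
    rw [h5]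
    have h6 : d * ((x+1)^(-d) * (x+1)⁻¹) = (x+1)^(-d) * (d * (1/(x+1))) := by ring
    rw [h6]
    apply mul_le_mul_of_nonneg_left _ (Real.rpow_nonneg (le_of_lt hx1) _)
    apply mul_le_mul_of_nonneg_left hlog (le_of_lt hd)
  calc (x+1)^(-(1+d)) * d = d * (x+1)^(-(1+d)) := by ring
    _ ≤ _ := le_trans hfin hkey

lemma aux_tele {d b : ℝ} (hd : 0 < d) (hb : 2 ≤ b) :
    ∑' n : ℕ, ((n:ℝ) + b) ^ (-(1+d)) ≤ (b-1)^(-d) / d := by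
  set u : ℕ → ℝ := fun n => ((n:ℝ) + b - 1)^(-d) with hu
  have hterm : ∀ n : ℕ, ((n:ℝ) + b) ^ (-(1+d)) ≤ (u n - u (n+1))/d := by
    intro n
    have hx : (1:ℝ) ≤ (n:ℝ) + b - 1 := by
      have : (0:ℝ) ≤ (n:ℝ) := Nat.cast_nonneg n
      linarith
    have h := aux_step hd hx
    have e1 : (n:ℝ) + b - 1 + 1 = (n:ℝ) + b := by ring
    rw [e1] at h
    have e2 : u (n+1) = ((n:ℝ) + b)^(-d) := by
      rw [hu]; push_cast; ring_nf
    rw [e2]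
    exact h
  apply Real.tsum_le_of_sum_range_le (fun n => Real.rpow_nonneg (by positivity) _)
  intro M
  have hun : 0 ≤ u M := Real.rpow_nonneg (by
    have : (0:ℝ) ≤ (M:ℝ) := Nat.cast_nonneg M
    linarith) _
  calc ∑ n ∈ Finset.range M, ((n:ℝ) + b) ^ (-(1+d))
      ≤ ∑ n ∈ Finset.range M, (u n - u (n+1))/d :=
        Finset.sum_le_sum (fun n _ => hterm n)
    _ = (∑ n ∈ Finset.range M, (u n - u (n+1))) / d := by rw [Finset.sum_div]
    _ = (u 0 - u M) / d := by rw [Finset.sum_range_sub' u M]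
    _ ≤ u 0 / d := by
        gcongr
        linarith
    _ = (b-1)^(-d) / d := by rw [hu]; norm_num

lemma aux_pointwise {w : ℂ} (hw : ‖w‖ ≤ 1) {t : ℝ} (ht0 : 0 ≤ t) (ht : t ≤ 1/2) :
    Real.log ‖1 - w * (t:ℂ)‖ - Real.log (1 - t) ≤ (1 - w.re) * t + 12 * t^2 := by
  have hwt : ‖w * (t:ℂ)‖ ≤ t := by
    rw [norm_mul, Complex.norm_real, Real.norm_eq_abs, abs_of_nonneg ht0]
    nlinarith [norm_nonneg w]
  have hlow : 1 - t ≤ ‖1 - w * (t:ℂ)‖ := by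
    have := norm_sub_norm_le (1 : ℂ) (w * (t:ℂ))
    rw [norm_one] at this
    linarith
  have hpos : (0:ℝ) < ‖1 - w * (t:ℂ)‖ := by linarith
  have hkey := aux_key hw ht0 ht
  have hlog := Real.log_le_log hpos hkey
  rw [Real.log_mul (by linarith) (Real.exp_ne_zero _), Real.log_exp] at hlog
  linarith

lemma aux_zlower {d : ℝ} (hd0 : 0 < d) :
    Real.exp (-1) / d ≤ ∑' n : ℕ, (n:ℝ)^(-(1+d)) := by
  have hts : Summable (fun n : ℕ => (n:ℝ)^(-(1+d))) :=
    Real.summable_nat_rpow.mpr (by linarith)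
  set N := ⌊Real.exp (1/d)⌋₊ with hN
  have hNle : (N:ℝ) ≤ Real.exp (1/d) := Nat.floor_le (Real.exp_nonneg _)
  have hlt : Real.exp (1/d) < (N:ℝ) + 1 := Nat.lt_floor_add_one _
  have hN1 : 1 ≤ N := by
    rw [hN]
    apply Nat.le_floor
    rw [Nat.cast_one]
    exact Real.one_le_exp (by positivity)
  have hharm : 1/d ≤ ∑ n ∈ Finset.Icc 1 N, ((n:ℝ))⁻¹ := by
    have h1 : Real.log ((N:ℝ)+1) ≤ ((harmonic N : ℚ) : ℝ) := by
      have := log_add_one_le_harmonic N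
      push_cast at this
      exact this
    have h2 : 1/d ≤ Real.log ((N:ℝ)+1) := by
      calc 1/d = Real.log (Real.exp (1/d)) := (Real.log_exp _).symm
        _ ≤ _ := Real.log_le_log (Real.exp_pos _) (le_of_lt hlt)
    have h3 : ((harmonic N : ℚ) : ℝ) = ∑ n ∈ Finset.Icc 1 N, ((n:ℝ))⁻¹ := by
      rw [harmonic_eq_sum_Icc]
      push_cast
      rfl
    linarith
  have hterm : ∀ n ∈ Finset.Icc 1 N, Real.exp (-1) * ((n:ℝ))⁻¹ ≤ (n:ℝ)^(-(1+d)) := by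
    intro n hn
    obtain ⟨h1n, hnN⟩ := Finset.mem_Icc.mp hn
    have hn0 : (0:ℝ) < n := by exact_mod_cast h1n
    have hNpos : (0:ℝ) < N := by
      have : (1:ℝ) ≤ (N:ℝ) := by exact_mod_cast hN1
      linarith
    have hlogn : d * Real.log n ≤ 1 := by
      have hle : Real.log n ≤ 1/d := by
        calc Real.log n ≤ Real.log ((N:ℝ)) := Real.log_le_log hn0 (by exact_mod_cast hnN)
          _ ≤ Real.log (Real.exp (1/d)) := Real.log_le_log hNpos hNle
          _ = 1/d := Real.log_exp _
      calc d * Real.log n ≤ d * (1/d) := mul_le_mul_of_nonneg_left hle hd0.le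
        _ = 1 := by field_simp
    have hsplit : (n:ℝ)^(-(1+d)) = (n:ℝ)^(-d) * (n:ℝ)⁻¹ := by
      rw [← Real.rpow_neg_one (n:ℝ), ← Real.rpow_add hn0]
      ring_nf
    rw [hsplit]
    have hexp : Real.exp (-1) ≤ (n:ℝ)^(-d) := by
      rw [Real.rpow_def_of_pos hn0]
      apply Real.exp_le_exp.2
      nlinarith
    exact mul_le_mul_of_nonneg_right hexp (inv_nonneg.2 hn0.le)
  calc Real.exp (-1)/d = Real.exp (-1) * (1/d) := by ring
    _ ≤ Real.exp (-1) * ∑ n ∈ Finset.Icc 1 N, ((n:ℝ))⁻¹ :=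
        mul_le_mul_of_nonneg_left hharm (Real.exp_nonneg _)
    _ = ∑ n ∈ Finset.Icc 1 N, Real.exp (-1) * ((n:ℝ))⁻¹ := Finset.mul_sum _ _ _
    _ ≤ ∑ n ∈ Finset.Icc 1 N, (n:ℝ)^(-(1+d)) := Finset.sum_le_sum hterm
    _ ≤ ∑' n : ℕ, (n:ℝ)^(-(1+d)) :=
        Summable.sum_le_tsum _ (fun i _ => Real.rpow_nonneg (Nat.cast_nonneg i) _) hts

set_option maxHeartbeats 1600000 in
theorem dirichlet_series_lower_bound :
    ∃ c y₀ : ℝ, 0 < c ∧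
      ∀ f : ℕ → ℂ, (∀ m n : ℕ, f (m * n) = f m * f n) → f 1 = 1 →
        (∀ n : ℕ, 1 ≤ n → ‖f n‖ ≤ 1) →
        ∀ y : ℝ, y₀ ≤ y →
          ‖∑' n : ℕ, f (n + 1) /
              ((((n : ℝ) + 1) ^ (1 + Real.log (Real.log y) / Real.log y) : ℝ) : ℂ)‖ ≥
            c * (Real.log y / Real.log (Real.log y)) *
              Real.exp (-(∑ p ∈ (Finset.Icc 1 ⌊y⌋₊).filter Nat.Prime,
                (1 - (f p).re) / p)) := by
  refine ⟨Real.exp (-14), Real.exp (Real.exp 4), Real.exp_pos _, ?_⟩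
  intro f hmul hf1 hbd y hy
  set d := Real.log (Real.log y) / Real.log y with hddef
  set L := Real.log y with hLdef
  set LL := Real.log L with hLLdef
  -- basic numeric facts
  have hy0 : (0:ℝ) < y := lt_of_lt_of_le (Real.exp_pos _) hy
  have hLe : Real.exp 4 ≤ L := by
    rw [hLdef]
    calc Real.exp 4 = Real.log (Real.exp (Real.exp 4)) := (Real.log_exp _).symm
      _ ≤ Real.log y := Real.log_le_log (Real.exp_pos _) hy
  have hLpos : (0:ℝ) < L := lt_of_lt_of_le (Real.exp_pos 4) hLe
  have hLL4 : (4:ℝ) ≤ LL := by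
    rw [hLLdef]
    calc (4:ℝ) = Real.log (Real.exp 4) := (Real.log_exp _).symm
      _ ≤ Real.log L := Real.log_le_log (Real.exp_pos _) hLe
  have hLLpos : (0:ℝ) < LL := by linarith
  have hd0 : (0:ℝ) < d := by rw [hddef]; exact div_pos hLLpos hLpos
  have hd1 : d ≤ 1 := by
    rw [hddef, div_le_one hLpos]
    have := Real.log_le_sub_one_of_pos hLpos
    rw [← hLLdef] at this
    linarith
  have hdL : d * L = LL := by
    rw [hddef]; field_simp
  have hy2 : (2:ℝ) ≤ y := by
    have h1 : (4:ℝ) + 1 ≤ Real.exp 4 := Real.add_one_le_exp 4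
    have h2 : Real.exp 4 + 1 ≤ Real.exp (Real.exp 4) := Real.add_one_le_exp _
    linarith
  -- the summand function
  set t : ℕ → ℝ := fun n => (n:ℝ)^(-(1+d)) with htdef
  have htsum : Summable t := Real.summable_nat_rpow.mpr (by linarith)
  have ht0 : t 0 = 0 := by
    rw [htdef]; simp only [Nat.cast_zero]
    exact Real.zero_rpow (by linarith)
  have ht1 : t 1 = 1 := by rw [htdef]; simp [Real.one_rpow]
  have htnn : ∀ n, 0 ≤ t n := fun n => Real.rpow_nonneg (Nat.cast_nonneg n) _
  have htmul : ∀ m n : ℕ, t (m * n) = t m * t n := by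
    intro m n
    rw [htdef]
    simp only [Nat.cast_mul]
    exact Real.mul_rpow (Nat.cast_nonneg m) (Nat.cast_nonneg n)
  -- the completely multiplicative functions
  obtain ⟨g, hgapp⟩ : ∃ g : ℕ →*₀ ℂ, ∀ n, g n = f n * ((t n : ℝ) : ℂ) := by
    refine ⟨⟨⟨fun n => f n * ((t n : ℝ) : ℂ), ?_⟩, ?_, ?_⟩, fun n => rfl⟩
    · simp [ht0]
    · simp [ht1, hf1]
    · intro m n
      simp only [hmul m n, htmul m n]
      push_cast
      ring
  obtain ⟨h, happ⟩ : ∃ h : ℕ →*₀ ℂ, ∀ n, h n = ((t n : ℝ) : ℂ) := by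
    refine ⟨⟨⟨fun n => ((t n : ℝ) : ℂ), ?_⟩, ?_, ?_⟩, fun n => rfl⟩
    · simp [ht0]
    · simp [ht1]
    · intro m n
      simp only [htmul m n]
      push_cast
      ring
  -- summability
  have hgn : Summable (fun n => ‖g n‖) := by
    apply Summable.of_nonneg_of_le (fun n => norm_nonneg _) _ htsum
    intro n
    rw [hgapp, norm_mul, Complex.norm_real, Real.norm_eq_abs, abs_of_nonneg (htnn n)]
    rcases Nat.eq_zero_or_pos n with h0 | h1
    · subst h0; simp [ht0]
    · have := hbd n h1
      nlinarith [htnn n, norm_nonneg (f n)]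
  have hhn : Summable (fun n => ‖h n‖) := by
    apply Summable.of_nonneg_of_le (fun n => norm_nonneg _) _ htsum
    intro n
    rw [happ, Complex.norm_real, Real.norm_eq_abs, abs_of_nonneg (htnn n)]
  have hgP : Summable (fun p : Nat.Primes => g ↑p) :=
    hgn.of_norm.comp_injective Subtype.val_injective
  have hhP : Summable (fun p : Nat.Primes => h ↑p) :=
    hhn.of_norm.comp_injective Subtype.val_injective
  have hglog : Summable (fun p : Nat.Primes => Complex.log (1 - g ↑p)) := hgP.clog_one_sub
  have hhlog : Summable (fun p : Nat.Primes => Complex.log (1 - h ↑p)) := hhP.clog_one_sub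
  have hA : Summable (fun p : Nat.Primes => Real.log ‖1 - g ↑p‖) := by
    have h2 := Complex.hasSum_re hglog.hasSum
    have h3 : (fun p : Nat.Primes => (Complex.log (1 - g ↑p)).re)
        = fun p : Nat.Primes => Real.log ‖1 - g ↑p‖ := by
      funext p; rw [Complex.log_re]
    exact h3 ▸ h2.summable
  have hB : Summable (fun p : Nat.Primes => Real.log ‖1 - h ↑p‖) := by
    have h2 := Complex.hasSum_re hhlog.hasSum
    have h3 : (fun p : Nat.Primes => (Complex.log (1 - h ↑p)).re)
        = fun p : Nat.Primes => Real.log ‖1 - h ↑p‖ := by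
      funext p; rw [Complex.log_re]
    exact h3 ▸ h2.summable
  -- prime facts
  have hp2 : ∀ p : Nat.Primes, (2:ℝ) ≤ ((p:ℕ):ℝ) := by
    intro p; exact_mod_cast p.prop.two_le
  have htp_half : ∀ p : Nat.Primes, t ↑p ≤ 1/2 := by
    intro p
    have h2p := hp2 p
    calc t ↑p = (((p:ℕ)):ℝ)^(-(1+d)) := rfl
      _ ≤ (2:ℝ)^(-(1+d)) := Real.rpow_le_rpow_of_nonpos two_pos h2p (by linarith)
      _ ≤ (2:ℝ)^(-1 : ℝ) := Real.rpow_le_rpow_of_exponent_le one_le_two (by linarith)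
      _ = 1/2 := by rw [Real.rpow_neg_one]; norm_num
  have hfp1 : ∀ p : Nat.Primes, ‖f ↑p‖ ≤ 1 := fun p => hbd _ (le_of_lt p.prop.one_lt)
  have hre1 : ∀ p : Nat.Primes, |(f ↑p).re| ≤ 1 := fun p =>
    le_trans (Complex.abs_re_le_norm _) (by exact hfp1 p)
  -- norms of 1 - h p
  have hnh : ∀ p : Nat.Primes, ‖1 - h ↑p‖ = 1 - t ↑p := by
    intro p
    rw [happ, show (1 : ℂ) - ((t ↑p : ℝ):ℂ) = (((1 - t ↑p : ℝ)):ℂ) by push_cast; ring,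
      Complex.norm_real, Real.norm_eq_abs, abs_of_nonneg (by linarith [htp_half p])]
  -- pointwise comparison
  have hptwise : ∀ p : Nat.Primes,
      Real.log ‖1 - g ↑p‖ - Real.log ‖1 - h ↑p‖
        ≤ (1 - (f ↑p).re) * t ↑p + 12 * (t ↑p)^2 := by
    intro p
    rw [hnh p, hgapp]
    exact aux_pointwise (hfp1 p) (htnn _) (htp_half p)
  -- Euler products and norms
  have key1 := EulerProduct.exp_tsum_primes_log_eq_tsum hgn
  have key2 := EulerProduct.exp_tsum_primes_log_eq_tsum hhn
  have hnormg : ‖∑' n : ℕ, g n‖ = Real.exp (∑' p : Nat.Primes, -Real.log ‖1 - g ↑p‖) := by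
    rw [← key1, Complex.norm_exp]
    congr 1
    rw [Complex.re_tsum hglog.neg]
    exact tsum_congr fun p => by rw [Complex.neg_re, Complex.log_re]
  have hnormh : ‖∑' n : ℕ, h n‖ = Real.exp (∑' p : Nat.Primes, -Real.log ‖1 - h ↑p‖) := by
    rw [← key2, Complex.norm_exp]
    congr 1
    rw [Complex.re_tsum hhlog.neg]
    exact tsum_congr fun p => by rw [Complex.neg_re, Complex.log_re]
  -- value of the zeta-like sum
  have hZc : (∑' n : ℕ, h n) = ((∑' n : ℕ, t n : ℝ) : ℂ) := by
    rw [Complex.ofReal_tsum]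
    exact tsum_congr fun n => (happ n).symm |>.symm ▸ rfl
  have hZr : ‖∑' n : ℕ, h n‖ = ∑' n : ℕ, t n := by
    rw [hZc, Complex.norm_real, Real.norm_eq_abs, abs_of_nonneg (tsum_nonneg htnn)]
  have hZlow : Real.exp (-1) / d ≤ ∑' n : ℕ, t n := aux_zlower hd0
  set Dsq := ∑ p ∈ (Finset.Icc 1 ⌊y⌋₊).filter Nat.Prime, (1 - (f p).re) / (p:ℝ) with hDsq
  -- summability of the comparison series over primes
  have hCsumP : Summable (fun p : Nat.Primes => (1 - (f ↑p).re) * t ↑p) := by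
    apply Summable.of_nonneg_of_le
      (f := fun p : Nat.Primes => 2 * t ↑p)
    · intro p
      have := (abs_le.1 (hre1 p)).2
      have h2 := htnn ((p:ℕ))
      nlinarith
    · intro p
      have := (abs_le.1 (hre1 p)).1
      exact mul_le_mul_of_nonneg_right (by linarith) (htnn _)
    · exact (htsum.mul_left 2).comp_injective Subtype.val_injective
  have hEsumP : Summable (fun p : Nat.Primes => 12 * (t ↑p)^2) := by
    apply Summable.of_nonneg_of_le (f := fun p : Nat.Primes => 12 * t ↑p)
    · intro p; positivity
    · intro p
      have h1 := htnn ((p:ℕ))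
      have h2 := htp_half p
      nlinarith
    · exact (htsum.mul_left 12).comp_injective Subtype.val_injective
  -- bound for the square sum
  have hE_le : (∑' p : Nat.Primes, 12 * (t ↑p)^2) ≤ 12 := by
    have hsq : ∀ p : Nat.Primes, (t ↑p)^2 = (((p:ℕ)):ℝ)^(-(1+(1+2*d))) := by
      intro p
      have hppos : (0:ℝ) < ((p:ℕ):ℝ) := by linarith [hp2 p]
      rw [show t ↑p = (((p:ℕ)):ℝ)^(-(1+d)) from rfl, sq, ← Real.rpow_add hppos]
      congr 1; ring
    have hsum2 : Summable (fun n : ℕ => ((n:ℝ) + 2)^(-(1+(1+2*d)))) := by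
      have h0 := Real.summable_nat_rpow.mpr (show -(1+(1+2*d)) < -1 by linarith)
      have h2 := (summable_nat_add_iff 2).2 h0
      refine h2.congr fun n => ?_
      congr 1
      push_cast
      ring
    have h2 : (∑' p : Nat.Primes, (t ↑p)^2) ≤ ∑' n : ℕ, ((n:ℝ) + 2)^(-(1+(1+2*d))) := by
      apply Summable.tsum_le_tsum_of_inj (fun p : Nat.Primes => (p:ℕ) - 2)
      · intro p q hpq
        have hp' := p.prop.two_le
        have hq' := q.prop.two_le
        exact Subtype.ext (by simp only at hpq; omega)
      · intro c _; positivity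
      · intro p
        rw [hsq p]
        have hcast : (((((p:ℕ) - 2 : ℕ)):ℝ)) + 2 = (((p:ℕ)):ℝ) := by
          have := p.prop.two_le
          rw [Nat.cast_sub this]
          ring
        rw [hcast]
      · apply Summable.of_nonneg_of_le (fun p => sq_nonneg _)
          (f := fun p : Nat.Primes => t ↑p)
          (fun p => by nlinarith [htnn ((p:ℕ)), htp_half p])
        exact htsum.comp_injective Subtype.val_injective
      · exact hsum2
    have h3 := aux_tele (show (0:ℝ) < 1 + 2*d by linarith) (le_refl (2:ℝ))
    have h4 : ((2:ℝ)-1)^(-(1+2*d))/(1+2*d) ≤ 1 := by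
      rw [show ((2:ℝ)-1) = 1 by norm_num, Real.one_rpow, div_le_one (by linarith)]
      linarith
    have h5 : (∑' p : Nat.Primes, (t ↑p)^2) ≤ 1 := le_trans h2 (le_trans h3 h4)
    calc (∑' p : Nat.Primes, 12 * (t ↑p)^2) = 12 * ∑' p : Nat.Primes, (t ↑p)^2 :=
          tsum_mul_left
      _ ≤ 12 := by nlinarith
  -- bound for the main comparison sum
  have hC_le : (∑' p : Nat.Primes, (1 - (f ↑p).re) * t ↑p) ≤ Dsq + 1 := by
    set Cf : ℕ → ℝ := fun n => if n.Prime then (1 - (f n).re) * t n else 0 with hCfdef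
    have habs : ∀ n : ℕ, n.Prime → |(f n).re| ≤ 1 := fun n hp =>
      le_trans (Complex.abs_re_le_norm _)
        (by exact hbd n (le_of_lt hp.one_lt))
    have hCnn : ∀ n, 0 ≤ Cf n := by
      intro n
      rw [hCfdef]
      dsimp only
      split
      · next hp =>
        have h1 := (abs_le.1 (habs n hp)).2
        have h2 := htnn n
        nlinarith
      · exact le_refl 0
    have hCle2 : ∀ n, Cf n ≤ 2 * t n := by
      intro n
      rw [hCfdef]
      dsimp only
      split
      · next hp =>
        have h1 := (abs_le.1 (habs n hp)).1
        exact mul_le_mul_of_nonneg_right (by linarith) (htnn _)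
      · have := htnn n; linarith
    have hCfsum : Summable Cf := Summable.of_nonneg_of_le hCnn hCle2 (htsum.mul_left 2)
    have hinj : (∑' p : Nat.Primes, (1 - (f ↑p).re) * t ↑p) ≤ ∑' n : ℕ, Cf n := by
      apply Summable.tsum_le_tsum_of_inj (Subtype.val) Subtype.val_injective (fun c _ => hCnn c)
        (fun p => ?_) hCsumP hCfsum
      rw [hCfdef]
      dsimp only
      rw [if_pos p.prop]
    set N := ⌊y⌋₊ + 1 with hNdef
    have hsplit := Summable.sum_add_tsum_nat_add N hCfsum
    have hfl1 : (1:ℝ) ≤ (⌊y⌋₊:ℝ) := by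
      have h1 : (1:ℕ) ≤ ⌊y⌋₊ := Nat.le_floor (by exact_mod_cast (by linarith : (1:ℝ) ≤ y))
      exact_mod_cast h1
    have hhead : ∑ n ∈ Finset.range N, Cf n ≤ Dsq := by
      have e1 : ∑ n ∈ Finset.range N, Cf n
          = ∑ n ∈ (Finset.range N).filter Nat.Prime, (1 - (f n).re) * t n :=
        (Finset.sum_filter _ _).symm
      rw [e1, hDsq]
      have step : ∀ n ∈ (Finset.range N).filter Nat.Prime,
          (1 - (f n).re) * t n ≤ (1 - (f n).re) / (n:ℝ) := by
        intro n hn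
        have hp := (Finset.mem_filter.1 hn).2
        have h1n : (1:ℝ) ≤ (n:ℝ) := by exact_mod_cast hp.one_lt.le
        have htle : t n ≤ (n:ℝ)⁻¹ := by
          calc t n = (n:ℝ)^(-(1+d)) := rfl
            _ ≤ (n:ℝ)^(-1:ℝ) := Real.rpow_le_rpow_of_exponent_le h1n (by linarith)
            _ = (n:ℝ)⁻¹ := Real.rpow_neg_one _
        have hnn : 0 ≤ 1 - (f n).re := by linarith [(abs_le.1 (habs n hp)).2]
        rw [div_eq_mul_inv]
        exact mul_le_mul_of_nonneg_left htle hnn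
      calc ∑ n ∈ (Finset.range N).filter Nat.Prime, (1 - (f n).re) * t n
          ≤ ∑ n ∈ (Finset.range N).filter Nat.Prime, (1 - (f n).re) / (n:ℝ) :=
            Finset.sum_le_sum step
        _ ≤ ∑ p ∈ (Finset.Icc 1 ⌊y⌋₊).filter Nat.Prime, (1 - (f p).re) / (p:ℝ) := by
            apply Finset.sum_le_sum_of_subset_of_nonneg
            · intro p hp
              rw [Finset.mem_filter] at hp ⊢
              rw [Finset.mem_range] at hp
              rw [Finset.mem_Icc]
              exact ⟨⟨hp.2.one_lt.le, by omega⟩, hp.2⟩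
            · intro i hi _
              rw [Finset.mem_filter] at hi
              have := (abs_le.1 (habs i hi.2)).2
              apply div_nonneg (by linarith) (Nat.cast_nonneg i)
    have htail : (∑' n : ℕ, Cf (n + N)) ≤ 1 := by
      have hsumL : Summable (fun n : ℕ => Cf (n + N)) := (summable_nat_add_iff N).2 hCfsum
      have e : ∀ n : ℕ, t (n + N) = ((n:ℝ) + (N:ℝ))^(-(1+d)) := by
        intro n
        rw [show t (n+N) = (((n+N:ℕ)):ℝ)^(-(1+d)) from rfl]
        congr 1
        push_cast
        ring
      have hsumR1 : Summable (fun n : ℕ => ((n:ℝ) + (N:ℝ))^(-(1+d))) :=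
        ((summable_nat_add_iff N).2 htsum).congr (fun n => e n)
      have hsumR : Summable (fun n : ℕ => 2 * ((n:ℝ) + (N:ℝ))^(-(1+d))) := hsumR1.mul_left 2
      have hpt : ∀ n : ℕ, Cf (n + N) ≤ 2 * ((n:ℝ) + (N:ℝ))^(-(1+d)) := by
        intro n
        have h0 := hCle2 (n + N)
        rw [e n] at h0
        exact h0
      have h1 := Summable.tsum_le_tsum hpt hsumL hsumR
      rw [tsum_mul_left] at h1
      have hb2 : (2:ℝ) ≤ (N:ℝ) := by rw [hNdef]; push_cast; linarith
      have h3 := aux_tele hd0 hb2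
      have h4 : ((N:ℝ) - 1) = (⌊y⌋₊:ℝ) := by rw [hNdef]; push_cast; ring
      rw [h4] at h3
      have hfl2 : y/2 ≤ (⌊y⌋₊:ℝ) := by
        have := Nat.lt_floor_add_one y
        linarith
      have h5 : ((⌊y⌋₊:ℝ))^(-d) ≤ (y/2)^(-d) :=
        Real.rpow_le_rpow_of_nonpos (by linarith) hfl2 (by linarith)
      have h6 : (y/2)^(-d) = y^(-d) / (2:ℝ)^(-d) := Real.div_rpow hy0.le (by norm_num) _
      have h7 : y^(-d) = 1/L := by
        rw [Real.rpow_def_of_pos hy0, ← hLdef,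
          show L * -d = -LL by rw [← hdL]; ring,
          Real.exp_neg, Real.exp_log hLpos, one_div]
      have h8 : y^(-d)/(2:ℝ)^(-d) = y^(-d) * (2:ℝ)^d := by
        rw [Real.rpow_neg (by norm_num : (0:ℝ) ≤ 2), div_eq_mul_inv, inv_inv]
      have h9 : (2:ℝ)^d ≤ 2 := by
        calc (2:ℝ)^d ≤ (2:ℝ)^(1:ℝ) := Real.rpow_le_rpow_of_exponent_le one_le_two hd1
          _ = 2 := Real.rpow_one 2
      have h10 : ((⌊y⌋₊:ℝ))^(-d)/d ≤ 1/2 := by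
        have hA2 : ((⌊y⌋₊:ℝ))^(-d) ≤ 2/L := by
          rw [h6, h8, h7] at h5
          calc ((⌊y⌋₊:ℝ))^(-d) ≤ 1/L * (2:ℝ)^d := h5
            _ ≤ 1/L * 2 := mul_le_mul_of_nonneg_left h9 (by positivity)
            _ = 2/L := by ring
        calc ((⌊y⌋₊:ℝ))^(-d)/d ≤ (2/L)/d := by gcongr
          _ = 2/(d*L) := by
              rw [div_div, mul_comm]
          _ = 2/LL := by rw [hdL]
          _ ≤ 1/2 := by
              rw [div_le_div_iff₀ hLLpos (by norm_num : (0:ℝ) < 2)]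
              linarith
      linarith
    calc (∑' p : Nat.Primes, (1 - (f ↑p).re) * t ↑p) ≤ ∑' n : ℕ, Cf n := hinj
      _ = ∑ n ∈ Finset.range N, Cf n + ∑' n : ℕ, Cf (n + N) := hsplit.symm
      _ ≤ Dsq + 1 := add_le_add hhead htail
  -- assemble the tsum comparison
  have hsubsum : Summable
      (fun p : Nat.Primes => Real.log ‖1 - g ↑p‖ - Real.log ‖1 - h ↑p‖) := hA.sub hB
  have hRHSsum : Summable
      (fun p : Nat.Primes => (1 - (f ↑p).re) * t ↑p + 12 * (t ↑p)^2) := hCsumP.add hEsumP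
  have hts1 := Summable.tsum_le_tsum hptwise hsubsum hRHSsum
  have hts2 := Summable.tsum_sub hA hB
  have hts3 := Summable.tsum_add hCsumP hEsumP
  have hXY : (∑' p : Nat.Primes, Real.log ‖1 - g ↑p‖)
      - (∑' p : Nat.Primes, Real.log ‖1 - h ↑p‖) ≤ Dsq + 13 := by
    rw [← hts2]
    calc _ ≤ _ := hts1
      _ = _ := hts3
      _ ≤ Dsq + 1 + 12 := add_le_add hC_le hE_le
      _ = Dsq + 13 := by ring
  -- final identities
  have hnormg' : ‖∑' n : ℕ, g n‖
      = Real.exp (-(∑' p : Nat.Primes, Real.log ‖1 - g ↑p‖)) := by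
    rw [hnormg, tsum_neg]
  have hnormh' : Real.exp (-(∑' p : Nat.Primes, Real.log ‖1 - h ↑p‖)) = ∑' n : ℕ, t n := by
    rw [← hZr, hnormh, tsum_neg]
  have htarget : (∑' n : ℕ, g n)
      = ∑' n : ℕ, f (n + 1) / ((((n:ℝ) + 1)^(1+d) : ℝ) : ℂ) := by
    have h0 : (∑' n : ℕ, g n) = ∑' n : ℕ, g (n+1) := by
      rw [Summable.tsum_eq_zero_add hgn.of_norm, hgapp 0, ht0]
      simp
    rw [h0]
    refine tsum_congr fun n => ?_
    rw [hgapp]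
    have e1 : t (n+1) = (((n:ℝ)+1)^(1+d))⁻¹ := by
      rw [show t (n+1) = (((n+1:ℕ)):ℝ)^(-(1+d)) from rfl,
        Real.rpow_neg (by positivity)]
      congr 2
      push_cast
      ring
    rw [e1, Complex.ofReal_inv, ← div_eq_mul_inv]
  rw [ge_iff_le, ← htarget, hnormg']
  have h1d : 1/d = L/LL := by rw [hddef, one_div_div]
  have e14 : Real.exp (-14) = Real.exp (-1) * Real.exp (-13) := by
    rw [← Real.exp_add]; norm_num
  calc Real.exp (-14) * (L/LL) * Real.exp (-Dsq)
      = (Real.exp (-1) / d) * Real.exp (-Dsq) * Real.exp (-13) := by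
        rw [e14, ← h1d]
        ring
    _ ≤ (∑' n : ℕ, t n) * Real.exp (-Dsq) * Real.exp (-13) := by
        have h2 := Real.exp_nonneg (-Dsq)
        have h3 := Real.exp_nonneg (-13:ℝ)
        exact mul_le_mul_of_nonneg_right
          (mul_le_mul_of_nonneg_right hZlow h2) h3
    _ = Real.exp (-(∑' p : Nat.Primes, Real.log ‖1 - h ↑p‖))
          * Real.exp (-Dsq) * Real.exp (-13) := by rw [hnormh']
    _ = Real.exp (-(∑' p : Nat.Primes, Real.log ‖1 - h ↑p‖) - Dsq - 13) := by
        rw [← Real.exp_add, ← Real.exp_add]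
        ring_nf
    _ ≤ Real.exp (-(∑' p : Nat.Primes, Real.log ‖1 - g ↑p‖)) :=
        Real.exp_le_exp.2 (by linarith)
end

section
/- Let χ be an even Dirichlet character modulo q, extended to ℤ via reduction modulo q, and let ψ be a primitive odd Dirichlet character modulo m. Then for every real N ≥ 1, ∑_{b mod m} ψ(b) · (∑_{1 ≤ |n| ≤ N} (χ(n)/n)·e(nb/m)) = 2·τ(ψ)·∑_{n ≤ N} χ(n)·conj(ψ(n))/n, where the outer sum on the left runs over residues b modulo m, the inner sum runs over nonzero integers n with |n| ≤ N, and the sum on the right runs over positive integers n ≤ N. -/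
open Finset

/-- `e(t) = e^{2πit}`. -/
noncomputable def eFun (t : ℝ) : ℂ := Complex.exp (2 * Real.pi * Complex.I * t)

/-- The Gauss sum `τ(ψ) = ∑_{b mod m} ψ(b) e(b/m)`. -/
noncomputable def gaussSumE {m : ℕ} [NeZero m] (ψ : DirichletCharacter ℂ m) : ℂ :=
  ∑ b : ZMod m, ψ b * eFun ((b.val : ℝ) / m)

lemma eFun_int_div (m : ℕ) [NeZero m] (j : ℤ) :
    eFun ((j : ℝ) / m) = ZMod.stdAddChar (j : ZMod m) := by
  rw [ZMod.stdAddChar_coe, eFun]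
  push_cast
  ring_nf

lemma gaussSumE_eq {m : ℕ} [NeZero m] (ψ : DirichletCharacter ℂ m) :
    gaussSumE ψ = gaussSum ψ ZMod.stdAddChar := by
  unfold gaussSumE gaussSum
  refine Finset.sum_congr rfl fun b _ => ?_
  have h : ((b.val : ℝ)) / m = (((b.val : ℤ) : ℝ)) / m := by push_cast; ring
  rw [h, eFun_int_div]
  norm_num

theorem twisted_sum_identity {q m : ℕ} [NeZero m]
    (χ : DirichletCharacter ℂ q) (hχ : χ.Even)
    (ψ : DirichletCharacter ℂ m) (hψ : ψ.IsPrimitive) (hψodd : ψ.Odd)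
    (N : ℝ) (hN : 1 ≤ N) :
    ∑ b : ZMod m, ψ b *
        ∑ n ∈ (Finset.Icc (-⌊N⌋) ⌊N⌋).erase 0,
          (χ (n : ZMod q) / (n : ℂ)) * eFun (n * (b.val : ℝ) / m) =
      2 * gaussSumE ψ *
        ∑ n ∈ Finset.Icc 1 ⌊N⌋₊, χ (n : ZMod q) * star (ψ (n : ZMod m)) / (n : ℂ) := by
  have h1 : ∀ (n : ℤ) (b : ZMod m), eFun ((n : ℝ) * (b.val : ℝ) / m)
      = ZMod.stdAddChar ((n : ZMod m) * b) := by
    intro n b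
    have h : ((n * (b.val : ℤ) : ℤ) : ZMod m) = (n : ZMod m) * b := by
      push_cast
      norm_num
    rw [← h, ← eFun_int_div]
    norm_cast
  simp_rw [h1, Finset.mul_sum]
  rw [Finset.sum_comm]
  set G := gaussSum ψ ZMod.stdAddChar with hG
  have h2 : ∀ n : ℤ,
      ∑ b : ZMod m, ψ b * ((χ (n : ZMod q) / (n : ℂ)) * ZMod.stdAddChar ((n : ZMod m) * b))
      = (χ (n : ZMod q) * star (ψ (n : ZMod m)) / (n : ℂ)) * G := by
    intro n
    have key := gaussSum_mulShift_of_isPrimitive ZMod.stdAddChar hψ (n : ZMod m)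
    rw [gaussSum] at key
    simp_rw [AddChar.mulShift_apply] at key
    calc ∑ b : ZMod m, ψ b * ((χ (n : ZMod q) / (n : ℂ)) * ZMod.stdAddChar ((n : ZMod m) * b))
        = (χ (n : ZMod q) / (n : ℂ)) * ∑ b : ZMod m, ψ b * ZMod.stdAddChar ((n : ZMod m) * b) := by
          rw [Finset.mul_sum]; exact Finset.sum_congr rfl fun b _ => by ring
      _ = (χ (n : ZMod q) / (n : ℂ)) * (ψ⁻¹ (n : ZMod m) * G) := by rw [key]
      _ = (χ (n : ZMod q) * star (ψ (n : ZMod m)) / (n : ℂ)) * G := by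
          rw [MulChar.star_apply']; ring
  simp_rw [h2]
  set F : ℤ → ℂ := fun n => (χ (n : ZMod q) * star (ψ (n : ZMod m)) / (n : ℂ)) * G with hF
  have hFeven : ∀ n : ℤ, F (-n) = F n := by
    intro n
    simp only [hF]
    push_cast
    rw [hχ.eval_neg, hψodd.eval_neg, star_neg]
    by_cases hn : (n : ℂ) = 0
    · simp [hn]
    · field_simp
  have hM : (1 : ℤ) ≤ ⌊N⌋ := by
    have := Int.le_floor.mpr (by exact_mod_cast hN : ((1:ℤ):ℝ) ≤ N)
    exact this
  have hsplit : (Finset.Icc (-⌊N⌋) ⌊N⌋).erase 0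
      = Finset.Icc (-⌊N⌋) (-1) ∪ Finset.Icc 1 ⌊N⌋ := by
    ext x
    simp only [Finset.mem_erase, Finset.mem_Icc, Finset.mem_union]
    omega
  have hdisj : Disjoint (Finset.Icc (-⌊N⌋) (-1)) (Finset.Icc (1:ℤ) ⌊N⌋) := by
    rw [Finset.disjoint_left]
    intro a ha hb
    simp only [Finset.mem_Icc] at ha hb
    omega
  rw [hsplit, Finset.sum_union hdisj]
  have hneg : ∑ n ∈ Finset.Icc (-⌊N⌋) (-1), F n = ∑ n ∈ Finset.Icc (1:ℤ) ⌊N⌋, F n := by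
    refine Finset.sum_nbij' (fun n => -n) (fun n => -n) ?_ ?_ ?_ ?_ ?_
    · intro a ha; simp only [Finset.mem_Icc] at *; omega
    · intro a ha; simp only [Finset.mem_Icc] at *; omega
    · intro a _; ring
    · intro a _; ring
    · intro a _; rw [← hFeven a]
  have hNf : ((⌊N⌋₊ : ℤ)) = ⌊N⌋ := Int.natCast_floor_eq_floor (by linarith)
  have hcast : ∑ n ∈ Finset.Icc (1:ℤ) ⌊N⌋, F n
      = ∑ n ∈ Finset.Icc 1 ⌊N⌋₊, F (n : ℤ) := by
    refine Finset.sum_nbij' (fun n => n.toNat) (fun n => (n : ℤ)) ?_ ?_ ?_ ?_ ?_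
    · intro a ha; simp only [Finset.mem_Icc] at *; (try dsimp only); omega
    · intro a ha; simp only [Finset.mem_Icc] at *; (try dsimp only); omega
    · intro a ha; simp only [Finset.mem_Icc] at ha; (try dsimp only); omega
    · intro a _; simp
    · intro a ha
      simp only [Finset.mem_Icc] at ha
      congr 1
      omega
  rw [hneg, hcast, ← two_mul, gaussSumE_eq, Finset.mul_sum]
  refine Finset.sum_congr rfl fun n _ => ?_
  simp only [hF]
  push_cast
  ring
end

section
/- There exists an absolute constant c > 0 such that the following holds. Let χ be an even Dirichlet character modulo q, extended to ℤ via reduction modulo q, and let ψ be a primitive odd Dirichlet character modulo m. Then for every real N ≥ 1, max_{θ ∈ [0,1]} |∑_{1 ≤ |n| ≤ N} (χ(n)/n)·e(nθ)| ≥ c · (√m/φ(m)) · |∑_{n ≤ N} χ(n)·conj(ψ(n))/n|. -/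
open Finset

open Complex in
lemma norm_eFun (t : ℝ) : ‖eFun t‖ = 1 := by
  have h : (2 * (Real.pi:ℂ) * Complex.I * t) = ((2 * Real.pi * t : ℝ) : ℂ) * Complex.I := by
    push_cast; ring
  rw [eFun, h, Complex.norm_exp_ofReal_mul_I]

lemma star_apply_eq {m : ℕ} (ψ : DirichletCharacter ℂ m) (a : ZMod m) :
    star (ψ a) = ψ⁻¹ a := by
  rw [MulChar.inv_apply_eq_inv]
  by_cases h : IsUnit a
  · have h1 : ‖ψ a‖ = 1 := by
      rw [← h.unit_spec]
      exact ψ.unit_norm_eq_one h.unit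
    rw [Ring.inverse_eq_inv, Complex.inv_eq_conj h1]
    rfl
  · rw [ψ.map_nonunit h, star_zero, Ring.inverse_zero]

lemma conj_stdAddChar {m : ℕ} [NeZero m] (a : ZMod m) :
    star (ZMod.stdAddChar a) = (ZMod.stdAddChar (N := m))⁻¹ a := by
  have h1 : ‖ZMod.stdAddChar a‖ = 1 := by
    rw [ZMod.stdAddChar_apply]; exact Circle.norm_coe _
  rw [AddChar.inv_apply', Complex.inv_eq_conj h1]
  rfl

lemma conj_gaussSum {m : ℕ} [NeZero m] (ψ : DirichletCharacter ℂ m) :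
    star (gaussSum ψ ZMod.stdAddChar) = gaussSum ψ⁻¹ (ZMod.stdAddChar (N := m))⁻¹ := by
  rw [gaussSum, gaussSum, star_sum]
  refine Finset.sum_congr rfl fun a _ => ?_
  rw [star_mul', star_apply_eq, conj_stdAddChar]

lemma stdAddChar_eq_eFun {m : ℕ} [NeZero m] (n : ℤ) (a : ZMod m) :
    ZMod.stdAddChar ((n : ZMod m) * a) = eFun ((n : ℝ) * ((a.val : ℝ) / m)) := by
  have ha : ((n * a.val : ℤ) : ZMod m) = (n : ZMod m) * a := by
    push_cast
    simp [ZMod.natCast_val, ZMod.cast_id]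
  rw [← ha, ZMod.stdAddChar_coe, eFun]
  congr 1
  push_cast
  ring

lemma innerSumAux {m : ℕ} [NeZero m] {ψ : DirichletCharacter ℂ m} (hψ : ψ.IsPrimitive) (n : ℤ) :
    ∑ a : ZMod m, ψ a * eFun ((n : ℝ) * ((a.val : ℝ) / m)) =
      ψ⁻¹ (n : ZMod m) * gaussSum ψ ZMod.stdAddChar := by
  rw [← gaussSum_mulShift_of_isPrimitive ZMod.stdAddChar hψ (n : ZMod m), gaussSum]
  refine Finset.sum_congr rfl fun a _ => ?_
  rw [AddChar.mulShift_apply, stdAddChar_eq_eFun]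

lemma le_biSup_Icc {f : ℝ → ℝ} {C : ℝ} (hC : ∀ θ, f θ ≤ C) {θ₀ : ℝ}
    (h₀ : θ₀ ∈ Set.Icc (0:ℝ) 1) :
    f θ₀ ≤ ⨆ θ ∈ Set.Icc (0:ℝ) 1, f θ := by
  have hg : ∀ θ : ℝ, (⨆ _ : θ ∈ Set.Icc (0:ℝ) 1, f θ) ≤ max C 0 := by
    intro θ
    by_cases h : θ ∈ Set.Icc (0:ℝ) 1
    · rw [ciSup_pos h]; exact le_max_of_le_left (hC θ)
    · haveI : IsEmpty (θ ∈ Set.Icc (0:ℝ) 1 : Prop) := ⟨h⟩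
      rw [Real.iSup_of_isEmpty]
      exact le_max_right _ _
  have hbdd : BddAbove (Set.range fun θ : ℝ => ⨆ _ : θ ∈ Set.Icc (0:ℝ) 1, f θ) := by
    refine ⟨max C 0, ?_⟩
    rintro x ⟨θ, rfl⟩
    exact hg θ
  have heq : (⨆ _ : θ₀ ∈ Set.Icc (0:ℝ) 1, f θ₀) = f θ₀ := ciSup_pos h₀
  exact heq ▸ le_ciSup hbdd θ₀

lemma card_isUnit {m : ℕ} [NeZero m] :
    (Finset.univ.filter (fun a : ZMod m => IsUnit a)).card = Nat.totient m := by
  have himg : Finset.univ.filter (fun a : ZMod m => IsUnit a)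
      = Finset.univ.image (fun u : (ZMod m)ˣ => (u : ZMod m)) := by
    ext a
    simp [Finset.mem_filter, Finset.mem_image, IsUnit, eq_comm]
  rw [himg, Finset.card_image_of_injective _ Units.val_injective, Finset.card_univ,
    ZMod.card_units_eq_totient]

lemma sum_mul_star_eq_totient {m : ℕ} [NeZero m] (ψ : DirichletCharacter ℂ m) :
    ∑ b : ZMod m, ψ b * star (ψ b) = (Nat.totient m : ℂ) := by
  have h : ∀ b : ZMod m, ψ b * star (ψ b) = if IsUnit b then 1 else 0 := by
    intro b
    by_cases hb : IsUnit b
    · rw [if_pos hb, show (star (ψ b)) = (starRingEnd ℂ) (ψ b) from rfl, Complex.mul_conj]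
      have h1 : ‖ψ b‖ = 1 := by rw [← hb.unit_spec]; exact ψ.unit_norm_eq_one hb.unit
      rw [Complex.normSq_eq_norm_sq, h1]
      norm_num
    · rw [if_neg hb, ψ.map_nonunit hb, zero_mul]
  rw [Finset.sum_congr rfl fun b _ => h b, Finset.sum_boole, card_isUnit]

lemma sum_norm_eq_totient {m : ℕ} [NeZero m] (ψ : DirichletCharacter ℂ m) :
    ∑ b : ZMod m, ‖ψ b‖ = (Nat.totient m : ℝ) := by
  have h : ∀ b : ZMod m, ‖ψ b‖ = if IsUnit b then 1 else 0 := by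
    intro b
    by_cases hb : IsUnit b
    · rw [if_pos hb, ← hb.unit_spec]; exact ψ.unit_norm_eq_one hb.unit
    · rw [if_neg hb, ψ.map_nonunit hb, norm_zero]
  rw [Finset.sum_congr rfl fun b _ => h b, Finset.sum_boole, card_isUnit]

lemma sum_stdAddChar_mul {m : ℕ} [NeZero m] (c : ZMod m) :
    ∑ b : ZMod m, ZMod.stdAddChar (c * b) = if c = 0 then (m : ℂ) else 0 := by
  by_cases hc : c = 0
  · rw [if_pos hc]
    simp only [hc, zero_mul, AddChar.map_zero_eq_one]
    rw [Finset.sum_const, Finset.card_univ, ZMod.card m]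
    simp
  · rw [if_neg hc]
    have h := (ZMod.isPrimitive_stdAddChar m) hc
    have h0 : (ZMod.stdAddChar.mulShift c : AddChar (ZMod m) ℂ) ≠ 0 := by
      rwa [← AddChar.one_eq_zero]
    have := AddChar.sum_eq_zero_iff_ne_zero.mpr h0
    simpa [AddChar.mulShift_apply] using this

lemma gaussSum_mul_conj {m : ℕ} [NeZero m] {ψ : DirichletCharacter ℂ m}
    (hψ : ψ.IsPrimitive) :
    gaussSum ψ ZMod.stdAddChar * star (gaussSum ψ ZMod.stdAddChar) = (m : ℂ) := by
  set τ := gaussSum ψ ZMod.stdAddChar with hτdef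
  have hS : ∀ b : ZMod m, (∑ a : ZMod m, ψ a * ZMod.stdAddChar (b * a)) = ψ⁻¹ b * τ := by
    intro b
    rw [← gaussSum_mulShift_of_isPrimitive ZMod.stdAddChar hψ b, gaussSum]
    exact Finset.sum_congr rfl fun a _ => by rw [AddChar.mulShift_apply]
  have key : ∀ b : ZMod m, (ψ⁻¹ b * τ) * star (ψ⁻¹ b * τ)
      = ∑ a : ZMod m, ∑ a' : ZMod m,
          (ψ a * star (ψ a')) * ZMod.stdAddChar ((a - a') * b) := by
    intro b
    rw [← hS b, star_sum, Finset.sum_mul_sum]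
    refine Finset.sum_congr rfl fun a _ => Finset.sum_congr rfl fun a' _ => ?_
    rw [star_mul', conj_stdAddChar, AddChar.inv_apply]
    have h2 : ZMod.stdAddChar (b * a) * ZMod.stdAddChar (-(b * a'))
        = ZMod.stdAddChar ((a - a') * b) := by
      rw [← AddChar.map_add_eq_mul]; congr 1; ring
    calc ψ a * ZMod.stdAddChar (b * a) * (star (ψ a') * ZMod.stdAddChar (-(b * a')))
        = (ψ a * star (ψ a')) * (ZMod.stdAddChar (b * a) * ZMod.stdAddChar (-(b * a'))) := by
          ring
      _ = (ψ a * star (ψ a')) * ZMod.stdAddChar ((a - a') * b) := by rw [h2]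
  have hT1 : ∑ b : ZMod m, (ψ⁻¹ b * τ) * star (ψ⁻¹ b * τ)
      = (Nat.totient m : ℂ) * (τ * star τ) := by
    rw [← sum_mul_star_eq_totient ψ⁻¹, Finset.sum_mul]
    refine Finset.sum_congr rfl fun b _ => ?_
    rw [star_mul']
    ring
  have hT2 : ∑ b : ZMod m, (ψ⁻¹ b * τ) * star (ψ⁻¹ b * τ)
      = (Nat.totient m : ℂ) * (m : ℂ) := by
    rw [Finset.sum_congr rfl fun b _ => key b]
    rw [Finset.sum_comm]
    rw [Finset.sum_congr rfl fun a _ => Finset.sum_comm]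
    have hcollapse : ∀ a : ZMod m,
        ∑ a' : ZMod m, ∑ b : ZMod m, (ψ a * star (ψ a')) * ZMod.stdAddChar ((a - a') * b)
        = ψ a * star (ψ a) * (m : ℂ) := by
      intro a
      have h1 : ∀ a' : ZMod m,
          ∑ b : ZMod m, (ψ a * star (ψ a')) * ZMod.stdAddChar ((a - a') * b)
          = if a' = a then (ψ a * star (ψ a')) * (m : ℂ) else 0 := by
        intro a'
        rw [← Finset.mul_sum, sum_stdAddChar_mul]
        by_cases h : a' = a
        · rw [if_pos h, if_pos (by rw [h, sub_self])]
        · rw [if_neg h, if_neg (fun hc => h (sub_eq_zero.mp hc).symm ), mul_zero]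
      rw [Finset.sum_congr rfl fun a' _ => h1 a', Finset.sum_ite_eq' Finset.univ a
        (fun a' => (ψ a * star (ψ a')) * (m : ℂ)), if_pos (Finset.mem_univ a)]
    rw [Finset.sum_congr rfl fun a _ => hcollapse a, ← Finset.sum_mul,
      sum_mul_star_eq_totient ψ]
  have := hT1.symm.trans hT2
  have htot : (Nat.totient m : ℂ) ≠ 0 := by
    simp only [ne_eq, Nat.cast_eq_zero]
    exact (Nat.totient_pos.mpr (Nat.pos_of_ne_zero (NeZero.ne m))).ne'
  exact mul_left_cancel₀ htot this

lemma norm_gaussSum {m : ℕ} [NeZero m] {ψ : DirichletCharacter ℂ m}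
    (hψ : ψ.IsPrimitive) :
    ‖gaussSum ψ ZMod.stdAddChar‖ = Real.sqrt m := by
  have key := gaussSum_mul_conj hψ
  rw [show (star (gaussSum ψ ZMod.stdAddChar)) = (starRingEnd ℂ) (gaussSum ψ ZMod.stdAddChar)
    from rfl, Complex.mul_conj] at key
  have h2 : Complex.normSq (gaussSum ψ ZMod.stdAddChar) = (m : ℝ) := by exact_mod_cast key
  rw [Complex.norm_def, h2]

theorem max_exp_sum_ge_twisted_sum :
    ∃ c : ℝ, 0 < c ∧
      ∀ (q m : ℕ) (χ : DirichletCharacter ℂ q) (ψ : DirichletCharacter ℂ m),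
        χ.Even → ψ.IsPrimitive → ψ.Odd →
        ∀ N : ℝ, 1 ≤ N →
          (⨆ θ ∈ Set.Icc (0 : ℝ) 1,
              ‖∑ n ∈ (Finset.Icc (-⌊N⌋) ⌊N⌋).erase 0,
                (χ (n : ZMod q) / (n : ℂ)) * eFun (n * θ)‖) ≥
            c * (Real.sqrt m / (Nat.totient m)) *
              ‖∑ n ∈ Finset.Icc 1 ⌊N⌋₊,
                χ (n : ZMod q) * star (ψ (n : ZMod m)) / (n : ℂ)‖ := by
  refine ⟨1, one_pos, ?_⟩
  intro q m χ ψ hχ hψprim hψodd N hN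
  set K : ℤ := ⌊N⌋ with hKdef
  have hK1 : 1 ≤ K := Int.le_floor.mpr (by exact_mod_cast hN)
  set A := (Finset.Icc (-K) K).erase 0 with hAdef
  set f : ℝ → ℝ := fun θ => ‖∑ n ∈ A, (χ (n : ZMod q) / (n : ℂ)) * eFun (n * θ)‖ with hfdef
  have hfC : ∀ θ, f θ ≤ ∑ n ∈ A, ‖χ (n : ZMod q) / (n : ℂ)‖ := by
    intro θ
    refine (norm_sum_le _ _).trans (Finset.sum_le_sum fun n _ => ?_)
    rw [norm_mul, norm_eFun, mul_one]
  set M := ⨆ θ ∈ Set.Icc (0 : ℝ) 1, f θ with hMdef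
  have hMnonneg : 0 ≤ M :=
    le_trans (norm_nonneg _) (le_biSup_Icc hfC ⟨le_refl (0:ℝ), zero_le_one⟩)
  by_cases hm : m = 0
  · subst hm
    simp only [Nat.cast_zero, Real.sqrt_zero, zero_div, mul_zero, zero_mul, one_mul, ge_iff_le]
    exact hMnonneg
  · haveI : NeZero m := ⟨hm⟩
    set τ := gaussSum ψ ZMod.stdAddChar with hτdef
    have hτnorm : ‖τ‖ = Real.sqrt m := norm_gaussSum hψprim
    have hinvneg : ψ⁻¹ (-1 : ZMod m) = -1 := by
      rw [MulChar.inv_apply_eq_inv, hψodd, Ring.inverse_eq_inv]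
      norm_num
    set F : ℤ → ℂ := fun n => (χ (n : ZMod q) / (n : ℂ)) * (ψ⁻¹ ((n : ZMod m)) * τ) with hFdef
    have hFeven : ∀ n : ℤ, F (-n) = F n := by
      intro n
      simp only [hFdef]
      have h1 : ((-n : ℤ) : ZMod q) = -((n : ℤ) : ZMod q) := by push_cast; ring
      have h2 : ((-n : ℤ) : ZMod m) = -((n : ℤ) : ZMod m) := by push_cast; ring
      have h3 : ψ⁻¹ (-((n : ℤ) : ZMod m)) = - ψ⁻¹ (((n : ℤ) : ZMod m)) := by
        have h4 : (-((n : ℤ) : ZMod m)) = (-1) * ((n : ℤ) : ZMod m) := by ring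
        rw [h4, map_mul, hinvneg]; ring
      rw [h1, h2, hχ.eval_neg, h3]
      push_cast
      rw [div_neg]
      ring
    have hpair : ∑ n ∈ A, F n = 2 * ∑ n ∈ Finset.Icc (1:ℤ) K, F n := by
      have hsplit : A = Finset.Icc (-K) (-1) ∪ Finset.Icc 1 K := by
        ext n
        simp only [hAdef, Finset.mem_erase, Finset.mem_Icc, Finset.mem_union]
        omega
      have hdisj : Disjoint (Finset.Icc (-K) (-1)) (Finset.Icc (1:ℤ) K) := by
        rw [Finset.disjoint_left]
        intro n h1 h2
        simp only [Finset.mem_Icc] at h1 h2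
        omega
      have himg : Finset.Icc (-K) (-1) = (Finset.Icc (1:ℤ) K).image (fun n => -n) := by
        ext n
        simp only [Finset.mem_Icc, Finset.mem_image]
        constructor
        · intro h; exact ⟨-n, ⟨by omega, by omega⟩, by omega⟩
        · rintro ⟨j, ⟨hj1, hj2⟩, rfl⟩; omega
      rw [hsplit, Finset.sum_union hdisj, himg,
        Finset.sum_image (fun a _ b _ h => neg_injective h)]
      rw [Finset.sum_congr rfl fun n _ => hFeven n]
      ring
    have hreindex : ∑ n ∈ Finset.Icc (1:ℤ) K, F n = ∑ n ∈ Finset.Icc 1 ⌊N⌋₊, F (n : ℤ) := by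
      have hKN : ((⌊N⌋₊ : ℤ)) = K := Int.natCast_floor_eq_floor (by linarith)
      rw [← hKN]
      refine Finset.sum_nbij' (fun n => n.toNat) (fun n => (n : ℤ)) ?_ ?_ ?_ ?_ ?_
      · intro a ha; simp only [Finset.mem_Icc] at *; omega
      · intro a ha; simp only [Finset.mem_Icc] at *; omega
      · intro a ha; simp only [Finset.mem_Icc] at ha; omega
      · intro a ha; simp only [Finset.mem_Icc] at ha; omega
      · intro a ha
        simp only [Finset.mem_Icc] at ha
        congr 1
        omega
    have hT : ∑ n ∈ Finset.Icc 1 ⌊N⌋₊, F (n : ℤ)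
        = τ * ∑ n ∈ Finset.Icc 1 ⌊N⌋₊, χ (n : ZMod q) * star (ψ (n : ZMod m)) / (n : ℂ) := by
      rw [Finset.mul_sum]
      refine Finset.sum_congr rfl fun n _ => ?_
      simp only [hFdef]
      rw [star_apply_eq]
      push_cast
      ring
    have hswap : ∑ a : ZMod m,
        ψ a * (∑ n ∈ A, (χ (n : ZMod q) / (n : ℂ)) * eFun (n * ((a.val : ℝ) / m)))
        = ∑ n ∈ A, F n := by
      calc ∑ a : ZMod m,
          ψ a * (∑ n ∈ A, (χ (n : ZMod q) / (n : ℂ)) * eFun (n * ((a.val : ℝ) / m)))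
          = ∑ a : ZMod m, ∑ n ∈ A,
              ψ a * ((χ (n : ZMod q) / (n : ℂ)) * eFun (n * ((a.val : ℝ) / m))) := by
            exact Finset.sum_congr rfl fun a _ => Finset.mul_sum _ _ _
        _ = ∑ n ∈ A, ∑ a : ZMod m,
              ψ a * ((χ (n : ZMod q) / (n : ℂ)) * eFun (n * ((a.val : ℝ) / m))) :=
            Finset.sum_comm
        _ = ∑ n ∈ A, (χ (n : ZMod q) / (n : ℂ)) *
              ∑ a : ZMod m, ψ a * eFun (n * ((a.val : ℝ) / m)) := by
            refine Finset.sum_congr rfl fun n _ => ?_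
            rw [Finset.mul_sum]
            exact Finset.sum_congr rfl fun a _ => by ring
        _ = ∑ n ∈ A, F n := by
            refine Finset.sum_congr rfl fun n _ => ?_
            rw [innerSumAux hψprim n]
    have hθmem : ∀ a : ZMod m, ((a.val : ℝ) / m) ∈ Set.Icc (0:ℝ) 1 := by
      intro a
      have hmpos : (0:ℝ) < m := by exact_mod_cast Nat.pos_of_ne_zero hm
      constructor
      · positivity
      · rw [div_le_one hmpos]
        exact_mod_cast (ZMod.val_lt a).le
    have hbound : ‖∑ n ∈ A, F n‖ ≤ (Nat.totient m : ℝ) * M := by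
      rw [← hswap]
      refine (norm_sum_le _ _).trans ?_
      have hterm : ∀ a : ZMod m,
          ‖ψ a * (∑ n ∈ A, (χ (n : ZMod q) / (n : ℂ)) * eFun (n * ((a.val : ℝ) / m)))‖
          ≤ ‖ψ a‖ * M := by
        intro a
        rw [norm_mul]
        exact mul_le_mul_of_nonneg_left (le_biSup_Icc hfC (hθmem a)) (norm_nonneg _)
      refine (Finset.sum_le_sum fun a _ => hterm a).trans ?_
      rw [← Finset.sum_mul, sum_norm_eq_totient]
    have hφpos : (0:ℝ) < (Nat.totient m : ℝ) := by
      exact_mod_cast Nat.totient_pos.mpr (Nat.pos_of_ne_zero hm)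
    have hnormsum : ‖∑ n ∈ A, F n‖ = 2 * Real.sqrt m *
        ‖∑ n ∈ Finset.Icc 1 ⌊N⌋₊, χ (n : ZMod q) * star (ψ (n : ZMod m)) / (n : ℂ)‖ := by
      rw [hpair, hreindex, hT, norm_mul, norm_mul, hτnorm]
      norm_num
      ring
    rw [ge_iff_le, one_mul, div_mul_eq_mul_div, div_le_iff₀ hφpos]
    have hTnonneg : (0:ℝ) ≤ Real.sqrt m *
        ‖∑ n ∈ Finset.Icc 1 ⌊N⌋₊, χ (n : ZMod q) * star (ψ (n : ZMod m)) / (n : ℂ)‖ := by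
      positivity
    calc Real.sqrt m * ‖∑ n ∈ Finset.Icc 1 ⌊N⌋₊,
          χ (n : ZMod q) * star (ψ (n : ZMod m)) / (n : ℂ)‖
        ≤ 2 * Real.sqrt m * ‖∑ n ∈ Finset.Icc 1 ⌊N⌋₊,
          χ (n : ZMod q) * star (ψ (n : ZMod m)) / (n : ℂ)‖ := by linarith
      _ = ‖∑ n ∈ A, F n‖ := hnormsum.symm
      _ ≤ (Nat.totient m : ℝ) * M := hbound
      _ = M * (Nat.totient m : ℝ) := mul_comm _ _
end
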